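/- arXiv:1410.1483 — 8 statements merged into one kernel-verified Lean document; each statement's English description precedes it below -/
import Mathlib

section
/- Let 0 → A →φ B →ψ C → 0 be a short exact sequence of abelian groups that is a t-extension, let A' be an abelian group and μ : A → A' a group homomorphism. Let H be the subgroup {(μ(a), −φ(a)) : a ∈ A} of A' ⊕ B, let φ' : A' → (A' ⊕ B)/H be given by a' ↦ (a', 0) + H and ψ' : (A' ⊕ B)/H → C be given by (a', b) + H ↦ ψ(b). Then the pushout sequence 0 → A' →φ' (A' ⊕ B)/H →ψ' C → 0 is a t-extension: every torsion element of C is the image under ψ' of a torsion element of (A' ⊕ B)/H, and every torsion element of (A' ⊕ B)/H lying in the kernel of ψ' is the image under φ' of a torsion element of A'. -/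
/-- The pushout of a t-extension of abelian groups along `μ : A →+ A'` is a t-extension. -/
theorem pushout_of_tExtension
    {A B C A' : Type*} [AddCommGroup A] [AddCommGroup B] [AddCommGroup C] [AddCommGroup A']
    (φ : A →+ B) (ψ : B →+ C)
    (hφ : Function.Injective φ) (hψ : Function.Surjective ψ)
    (hexact : ∀ b : B, ψ b = 0 ↔ b ∈ φ.range)
    -- the given extension is a t-extension:
    (htsurj : ∀ c : C, IsOfFinAddOrder c → ∃ b : B, IsOfFinAddOrder b ∧ ψ b = c)
    (htker : ∀ b : B, IsOfFinAddOrder b → ψ b = 0 →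
      ∃ a : A, IsOfFinAddOrder a ∧ φ a = b)
    (μ : A →+ A')
    -- H = {(μ a, -φ a) : a ∈ A}
    (H : AddSubgroup (A' × B))
    (hH : H = AddMonoidHom.range ((μ.prod (-φ))))
    -- φ' : A' → (A' ⊕ B)/H, a' ↦ (a',0) + H
    (φ' : A' →+ (A' × B) ⧸ H)
    (hφ' : ∀ a' : A', φ' a' = QuotientAddGroup.mk' H (a', 0))
    -- ψ' : (A' ⊕ B)/H → C, (a', b) + H ↦ ψ b
    (ψ' : (A' × B) ⧸ H →+ C)
    (hψ' : ∀ p : A' × B, ψ' (QuotientAddGroup.mk' H p) = ψ p.2) :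
    (∀ c : C, IsOfFinAddOrder c →
      ∃ q : (A' × B) ⧸ H, IsOfFinAddOrder q ∧ ψ' q = c) ∧
    (∀ q : (A' × B) ⧸ H, IsOfFinAddOrder q → ψ' q = 0 →
      ∃ a' : A', IsOfFinAddOrder a' ∧ φ' a' = q) := by
  constructor
  · intro c hc
    obtain ⟨b, hb, hbc⟩ := htsurj c hc
    refine ⟨QuotientAddGroup.mk' H (0, b), ?_, by rw [hψ']; exact hbc⟩
    rw [isOfFinAddOrder_iff_nsmul_eq_zero] at hb ⊢
    obtain ⟨n, hn, hnb⟩ := hb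
    refine ⟨n, hn, ?_⟩
    have h0 : n • (((0 : A'), b) : A' × B) = 0 := by
      rw [Prod.smul_mk, hnb, smul_zero]; rfl
    rw [← map_nsmul, h0, map_zero]
  · intro q hq hq0
    obtain ⟨⟨a', b⟩, rfl⟩ := QuotientAddGroup.mk'_surjective H q
    rw [hψ'] at hq0
    obtain ⟨a, rfl⟩ := (hexact b).mp hq0
    rw [isOfFinAddOrder_iff_nsmul_eq_zero] at hq
    obtain ⟨n, hn, hnq⟩ := hq
    rw [← map_nsmul, ← map_zero (QuotientAddGroup.mk' H),
      QuotientAddGroup.mk'_eq_mk'] at hnq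
    obtain ⟨z, hz, hz'⟩ := hnq
    rw [hH] at hz
    obtain ⟨a₀, ha₀⟩ := hz
    have hfst := congrArg Prod.fst ha₀
    have hsnd := congrArg Prod.snd ha₀
    simp only [AddMonoidHom.prod_apply, AddMonoidHom.neg_apply] at hfst hsnd
    have hz1 := congrArg Prod.fst hz'
    have hz2 := congrArg Prod.snd hz'
    simp only [Prod.smul_mk, Prod.fst_add, Prod.snd_add, Prod.fst_zero, Prod.snd_zero] at hz1 hz2
    -- hz1 : n • a' + z.1 = 0,  hz2 : n • φ a + z.2 = 0
    have h1 : μ a₀ = -(n • a') := hfst.trans (neg_eq_of_add_eq_zero_right hz1).symm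
    have h2 : φ a₀ = n • φ a := by
      have : -φ a₀ = -(n • φ a) := hsnd.trans (neg_eq_of_add_eq_zero_right hz2).symm
      exact neg_injective this
    have ha0 : a₀ = n • a := hφ (by rw [map_nsmul]; exact h2)
    refine ⟨a' + μ a, ?_, ?_⟩
    · rw [isOfFinAddOrder_iff_nsmul_eq_zero]
      refine ⟨n, hn, ?_⟩
      have : n • (a' + μ a) = n • a' + μ a₀ := by
        rw [ha0, map_nsmul, smul_add]
      rw [this, h1, add_neg_cancel]
    · rw [hφ', QuotientAddGroup.mk'_eq_mk']
      refine ⟨(μ.prod (-φ)) (-a), by rw [hH]; exact ⟨-a, rfl⟩, ?_⟩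
      simp only [AddMonoidHom.prod_apply, AddMonoidHom.neg_apply, map_neg, neg_neg,
        Prod.mk_add_mk]
      ext
      · simp [add_assoc]
      · simp
end

section
/- Let 0 → A →φ B →ψ C → 0 be a short exact sequence of abelian groups that is a t-extension, let C' be an abelian group and γ : C' → C a group homomorphism. Let B' be the subgroup {(b, c') ∈ B ⊕ C' : ψ(b) = γ(c')}, let φ' : A → B' be given by a ↦ (φ(a), 0) and ψ' : B' → C' be given by (b, c') ↦ c'. Then the pullback sequence 0 → A →φ' B' →ψ' C' → 0 is a t-extension: every torsion element of C' is the image under ψ' of a torsion element of B', and every torsion element of B' lying in the kernel of ψ' is the image under φ' of a torsion element of A. -/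
/-- The pullback of a t-extension of abelian groups along `γ : C' →+ C` is a t-extension. -/
theorem pullback_of_tExtension
    {A B C C' : Type*} [AddCommGroup A] [AddCommGroup B] [AddCommGroup C] [AddCommGroup C']
    (φ : A →+ B) (ψ : B →+ C)
    (hφ : Function.Injective φ) (hψ : Function.Surjective ψ)
    (hexact : ∀ b : B, ψ b = 0 ↔ b ∈ φ.range)
    -- the given extension is a t-extension:
    (htsurj : ∀ c : C, IsOfFinAddOrder c → ∃ b : B, IsOfFinAddOrder b ∧ ψ b = c)
    (htker : ∀ b : B, IsOfFinAddOrder b → ψ b = 0 →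
      ∃ a : A, IsOfFinAddOrder a ∧ φ a = b)
    (γ : C' →+ C)
    -- B' = {(b, c') : ψ b = γ c'}
    (B' : AddSubgroup (B × C'))
    (hB' : ∀ p : B × C', p ∈ B' ↔ ψ p.1 = γ p.2)
    -- φ' : A → B', a ↦ (φ a, 0)
    (φ' : A →+ B')
    (hφ' : ∀ a : A, (φ' a : B × C') = (φ a, 0))
    -- ψ' : B' → C', (b, c') ↦ c'
    (ψ' : B' →+ C')
    (hψ' : ∀ p : B', ψ' p = (p : B × C').2) :
    (∀ c' : C', IsOfFinAddOrder c' →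
      ∃ p : B', IsOfFinAddOrder p ∧ ψ' p = c') ∧
    (∀ p : B', IsOfFinAddOrder p → ψ' p = 0 →
      ∃ a : A, IsOfFinAddOrder a ∧ φ' a = p) := by
  have hcoe : ∀ (p : B'), IsOfFinAddOrder p ↔ IsOfFinAddOrder (p : B × C') := by
    intro p
    simp only [isOfFinAddOrder_iff_nsmul_eq_zero]
    constructor
    · rintro ⟨n, hn, h⟩
      exact ⟨n, hn, by rw [← AddSubgroup.coe_nsmul, h, AddSubgroup.coe_zero]⟩
    · rintro ⟨n, hn, h⟩
      refine ⟨n, hn, Subtype.ext ?_⟩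
      rw [AddSubgroup.coe_nsmul, h, AddSubgroup.coe_zero]
  constructor
  · intro c' hc'
    obtain ⟨b, hb, hbc⟩ := htsurj (γ c') (γ.isOfFinAddOrder hc')
    have hmem : (b, c') ∈ B' := (hB' _).2 hbc
    refine ⟨⟨(b, c'), hmem⟩, ?_, ?_⟩
    · rw [hcoe]
      exact hb.prod_mk hc'
    · rw [hψ']
  · intro p hp hp0
    have h2 : (p : B × C').2 = 0 := by rw [← hψ' p, hp0]
    have hmem := (hB' (p : B × C')).1 p.2
    rw [h2, map_zero] at hmem
    have hb : IsOfFinAddOrder (p : B × C').1 := (AddMonoidHom.fst B C').isOfFinAddOrder ((hcoe p).1 hp)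
    obtain ⟨a, ha, hab⟩ := htker _ hb hmem
    refine ⟨a, ha, Subtype.ext ?_⟩
    rw [hφ', hab, ← h2]
end

section
/- Let 0 → A →φ B →ψ C → 0 be a short exact sequence of abelian groups that is a t-extension, where A is torsion-free and C is a torsion group. Then B is the internal direct sum of φ(A) and the torsion subgroup tB of B (that is, B = φ(A) + tB and φ(A) ∩ tB = 0), and the sequence splits: there exists a group homomorphism s : C → B with ψ ∘ s = id_C. -/
/-- A t-extension of a torsion-free group by a torsion group splits, and the middle
group is the internal direct sum of `φ(A)` and its torsion subgroup. -/
theorem tExtension_splits_of_torsionFree_by_torsion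
    {A B C : Type*} [AddCommGroup A] [AddCommGroup B] [AddCommGroup C]
    (φ : A →+ B) (ψ : B →+ C)
    (hφ : Function.Injective φ) (hψ : Function.Surjective ψ)
    (hexact : ∀ b : B, ψ b = 0 ↔ b ∈ φ.range)
    -- the sequence is a t-extension:
    (htsurj : ∀ c : C, IsOfFinAddOrder c → ∃ b : B, IsOfFinAddOrder b ∧ ψ b = c)
    (htker : ∀ b : B, IsOfFinAddOrder b → ψ b = 0 →
      ∃ a : A, IsOfFinAddOrder a ∧ φ a = b)
    -- A is torsion-free:
    (hA : ∀ a : A, IsOfFinAddOrder a → a = 0)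
    -- C is a torsion group:
    (hC : ∀ c : C, IsOfFinAddOrder c) :
    -- B = φ(A) + tB:
    (∀ b : B, ∃ a : A, ∃ t : B, IsOfFinAddOrder t ∧ b = φ a + t) ∧
    -- φ(A) ∩ tB = 0:
    (∀ b : B, b ∈ φ.range → IsOfFinAddOrder b → b = 0) ∧
    -- the sequence splits:
    (∃ s : C →+ B, ψ.comp s = AddMonoidHom.id C) := by
  -- intersection is trivial
  have hint : ∀ b : B, b ∈ φ.range → IsOfFinAddOrder b → b = 0 := by
    intro b hb ht
    obtain ⟨a, ha, rfl⟩ := htker b ht ((hexact b).2 hb)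
    rw [hA a ha, map_zero]
  refine ⟨?_, hint, ?_⟩
  · intro b
    obtain ⟨t, htt, hψt⟩ := htsurj (ψ b) (hC (ψ b))
    have : ψ (b - t) = 0 := by simp [hψt]
    obtain ⟨a, ha⟩ := (hexact (b - t)).1 this
    exact ⟨a, t, htt, by rw [ha]; abel⟩
  · -- splitting via ψ restricted to torsion subgroup
    set T := AddCommGroup.torsion B
    have hmem : ∀ t : B, t ∈ T ↔ IsOfFinAddOrder t := fun t => Iff.rfl
    let f : T →+ C := ψ.comp T.subtype
    have hbij : Function.Bijective f := by
      constructor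
      · intro x y hxy
        have hxt : IsOfFinAddOrder ((x : B) - y) := ((hmem _).1 (sub_mem x.2 y.2))
        have hker : ψ ((x : B) - y) = 0 := by
          have : ψ (x : B) = ψ (y : B) := hxy
          simp [this]
        have := hint _ ((hexact _).1 hker) hxt
        exact Subtype.ext (sub_eq_zero.1 this)
      · intro c
        obtain ⟨b, hb, hψb⟩ := htsurj c (hC c)
        exact ⟨⟨b, (hmem b).2 hb⟩, hψb⟩
    let e := AddEquiv.ofBijective f hbij
    refine ⟨T.subtype.comp e.symm.toAddMonoidHom, ?_⟩
    ext c
    exact e.apply_symm_apply c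
end

section
/- Let A be an abelian group and suppose that every short exact sequence 0 → A →φ B →ψ C → 0 of abelian groups that is a t-extension splits (there exists a homomorphism s : C → B with ψ ∘ s = id_C). Then the torsion subgroup tA of A is a divisible group. -/
universe u

private lemma tors_zsmul {A : Type u} [AddCommGroup A] {a : A} (ha : IsOfFinAddOrder a)
    (k : ℤ) : IsOfFinAddOrder (k • a) := by
  rw [isOfFinAddOrder_iff_nsmul_eq_zero] at *
  obtain ⟨m, hm, h0⟩ := ha
  exact ⟨m, hm, by rw [smul_comm, h0, smul_zero]⟩

private lemma tors_add {A : Type u} [AddCommGroup A] {a b : A} (ha : IsOfFinAddOrder a)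
    (hb : IsOfFinAddOrder b) : IsOfFinAddOrder (a + b) := by
  rw [isOfFinAddOrder_iff_nsmul_eq_zero] at *
  obtain ⟨m, hm, h0⟩ := ha
  obtain ⟨k, hk, h1⟩ := hb
  refine ⟨m * k, by positivity, ?_⟩
  rw [smul_add, mul_comm, mul_smul, h0, smul_zero, mul_comm, mul_smul, h1, smul_zero, add_zero]

private lemma ulift_apply {M : Type} (x : M) [Add M] :
    (AddEquiv.ulift : ULift.{u} M ≃+ M) (ULift.up x) = x := rfl

/-- If every t-extension of `A` splits, then the torsion subgroup of `A` is divisible. -/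
theorem torsion_divisible_of_tExtensions_split
    (A : Type u) [AddCommGroup A]
    -- every t-extension of A splits:
    (hsplit : ∀ (B C : Type u) (_ : AddCommGroup B) (_ : AddCommGroup C)
      (φ : A →+ B) (ψ : B →+ C),
      Function.Injective φ → Function.Surjective ψ →
      (∀ b : B, ψ b = 0 ↔ b ∈ φ.range) →
      (∀ c : C, IsOfFinAddOrder c → ∃ b : B, IsOfFinAddOrder b ∧ ψ b = c) →
      (∀ b : B, IsOfFinAddOrder b → ψ b = 0 → ∃ a : A, IsOfFinAddOrder a ∧ φ a = b) →
      ∃ s : C →+ B, ψ.comp s = AddMonoidHom.id C) :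
    -- tA is divisible:
    ∀ a : A, IsOfFinAddOrder a → ∀ n : ℕ, 0 < n →
      ∃ x : A, IsOfFinAddOrder x ∧ n • x = a := by
  intro a ha n hn
  haveI : NeZero n := ⟨hn.ne'⟩
  have hnZ : (n : ℤ) ≠ 0 := by exact_mod_cast hn.ne'
  set g : A × ULift.{u} ℤ := (-a, ULift.up (n : ℤ)) with hg
  set S : AddSubgroup (A × ULift.{u} ℤ) := AddSubgroup.zmultiples g with hS
  have hmem : ∀ p : A × ULift.{u} ℤ, p ∈ S ↔ ∃ m : ℤ, p.1 = m • (-a) ∧ p.2.down = m * n := by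
    intro p
    constructor
    · rintro ⟨m, rfl⟩
      exact ⟨m, rfl, by simp [hg, ULift.smul_def]⟩
    · rintro ⟨m, h1, h2⟩
      refine ⟨m, ?_⟩
      ext
      · exact h1.symm
      · simp [hg, ULift.smul_def, h2]
  set B := (A × ULift.{u} ℤ) ⧸ S with hB
  set φ : A →+ B := (QuotientAddGroup.mk' S).comp (AddMonoidHom.inl A (ULift.{u} ℤ)) with hφ
  have hφ' : ∀ x : A, φ x = QuotientAddGroup.mk (x, (0 : ULift.{u} ℤ)) := fun x => rfl
  set f : (A × ULift.{u} ℤ) →+ ULift.{u} (ZMod n) :=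
    { toFun := fun p => ULift.up ((p.2.down : ZMod n))
      map_zero' := by simp [ULift.ext_iff]
      map_add' := by intro p q; simp [ULift.ext_iff] } with hfdef
  have hf : S ≤ f.ker := by
    rintro p hp
    obtain ⟨m, h1, h2⟩ := (hmem p).1 hp
    simp only [AddMonoidHom.mem_ker]
    simp [hfdef, ULift.ext_iff, h2]
  set ψ : B →+ ULift.{u} (ZMod n) := QuotientAddGroup.lift S f hf with hψ
  have hψmk : ∀ p : A × ULift.{u} ℤ,
      ψ (QuotientAddGroup.mk p) = ULift.up ((p.2.down : ZMod n)) := fun p => rfl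
  -- injectivity of φ
  have hinj : Function.Injective φ := by
    intro x y hxy
    have hmemS : ((x - y, (0 : ULift.{u} ℤ)) : A × ULift.{u} ℤ) ∈ S := by
      rw [← QuotientAddGroup.eq_zero_iff]
      have h0 : φ (x - y) = 0 := by rw [map_sub, hxy, sub_self]
      rw [hφ'] at h0; exact h0
    obtain ⟨m, h1, h2⟩ := (hmem _).1 hmemS
    simp only [ULift.zero_down] at h2  -- (0 : ULift ℤ).down = 0
    have hm : m = 0 := by
      rcases mul_eq_zero.mp h2.symm with h | h
      · exact h
      · exact absurd h hnZ
    rw [hm, zero_smul] at h1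
    exact sub_eq_zero.mp h1
  -- surjectivity of ψ
  have hsurj : Function.Surjective ψ := by
    intro c
    refine ⟨QuotientAddGroup.mk (0, ULift.up (ZMod.cast c.down : ℤ)), ?_⟩
    rw [hψmk]
    simp [ULift.ext_iff, ZMod.intCast_zmod_cast]
  -- exactness
  have hker : ∀ b : B, ψ b = 0 ↔ b ∈ φ.range := by
    intro b
    obtain ⟨p, rfl⟩ := QuotientAddGroup.mk_surjective b
    rw [hψmk]
    constructor
    · intro h
      have hdvd : (n : ℤ) ∣ p.2.down := by
        rw [← ZMod.intCast_zmod_eq_zero_iff_dvd]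
        simpa [ULift.ext_iff] using h
      obtain ⟨t, ht⟩ := hdvd
      refine ⟨p.1 + t • a, ?_⟩
      rw [hφ']
      rw [QuotientAddGroup.eq]
      rw [hmem]
      refine ⟨t, ?_, ?_⟩
      · simp [smul_neg]
      · simp [ht, mul_comm]
    · rintro ⟨x, hx⟩
      rw [hφ'] at hx
      have : ((p.2.down : ZMod n)) = ((0 : ℤ) : ZMod n) := by
        have := congrArg ψ hx
        rw [hψmk, hψmk] at this
        simpa [ULift.ext_iff] using this.symm
      simpa [ULift.ext_iff] using this
  -- torsion surjectivity
  have htors : ∀ c : ULift.{u} (ZMod n), IsOfFinAddOrder c →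
      ∃ b : B, IsOfFinAddOrder b ∧ ψ b = c := by
    intro c _
    set k : ℤ := (ZMod.cast c.down : ℤ) with hk
    refine ⟨QuotientAddGroup.mk (0, ULift.up k), ?_, ?_⟩
    · -- n • b = φ (k • a), which is torsion
      have hnb : n • (QuotientAddGroup.mk (0, ULift.up k) : B) = φ (k • a) := by
        rw [hφ']
        show QuotientAddGroup.mk (n • ((0 : A), ULift.up k)) = _
        rw [QuotientAddGroup.eq, hmem]
        refine ⟨-k, ?_, ?_⟩
        · simp
        · have hdown : (-(n • (((0:A), ULift.up k) : A × ULift.{u} ℤ)) + (k • a, (0 : ULift.{u} ℤ))).2.down = -(n • k) := by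
            simp only [Prod.snd_add, Prod.snd_neg, Prod.smul_snd, ULift.add_down, ULift.neg_down,
              ULift.smul_down, ULift.zero_down, add_zero]
          rw [hdown]
          simp only [nsmul_eq_mul]; push_cast; ring
      have : IsOfFinAddOrder (n • (QuotientAddGroup.mk (0, ULift.up k) : B)) := by
        rw [hnb]
        exact φ.isOfFinAddOrder (tors_zsmul ha k)
      exact this.of_nsmul hn.ne'
    · rw [hψmk]
      simp [ULift.ext_iff, hk, ZMod.intCast_zmod_cast]
  -- torsion kernel
  have htker : ∀ b : B, IsOfFinAddOrder b → ψ b = 0 →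
      ∃ x : A, IsOfFinAddOrder x ∧ φ x = b := by
    intro b hb h0
    obtain ⟨x, hx⟩ := (hker b).1 h0
    refine ⟨x, ?_, hx⟩
    rw [isOfFinAddOrder_iff_nsmul_eq_zero] at hb ⊢
    obtain ⟨m, hm, hmb⟩ := hb
    refine ⟨m, hm, hinj ?_⟩
    rw [map_nsmul, hx, hmb, map_zero]
  -- apply the splitting hypothesis
  obtain ⟨s, hs⟩ := hsplit B (ULift.{u} (ZMod n)) inferInstance inferInstance φ ψ
    hinj hsurj hker htors htker
  set b : B := s (ULift.up (1 : ZMod n)) with hb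
  have hψb : ψ b = ULift.up (1 : ZMod n) := by
    have := DFunLike.congr_fun hs (ULift.up (1 : ZMod n))
    simpa using this
  have hnb : n • b = 0 := by
    rw [hb, ← map_nsmul]
    have : n • (ULift.up (1 : ZMod n)) = 0 := by
      have := map_nsmul (AddEquiv.ulift : ULift.{u} (ZMod n) ≃+ ZMod n).toAddMonoidHom
        n (ULift.up (1 : ZMod n))
      have h2 : n • (1 : ZMod n) = 0 := by
        simp [nsmul_eq_mul]
      apply (AddEquiv.ulift : ULift.{u} (ZMod n) ≃+ ZMod n).injective
      simpa [h2] using this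
    rw [this, map_zero]
  obtain ⟨p, hp⟩ := QuotientAddGroup.mk_surjective b
  set x : A := p.1 with hx
  set k : ℤ := p.2.down with hk
  -- k ≡ 1 mod n
  have hk1 : ((k : ZMod n)) = 1 := by
    have := hψb
    rw [← hp, hψmk] at this
    simpa [ULift.ext_iff] using this
  have hdvd : (n : ℤ) ∣ (k - 1) := by
    rw [← ZMod.intCast_zmod_eq_zero_iff_dvd]
    push_cast
    rw [hk1]; ring
  obtain ⟨t, ht⟩ := hdvd
  have hkt : k = 1 + n * t := by linarith
  -- n • x = -(k • a)
  have hmemnp : (n • p) ∈ S := by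
    rw [← QuotientAddGroup.eq_zero_iff]
    show (QuotientAddGroup.mk (n • p) : B) = 0
    have : (QuotientAddGroup.mk (n • p) : B) = n • QuotientAddGroup.mk p := by
      simp
    rw [this, hp, hnb]
  obtain ⟨m, h1, h2⟩ := (hmem _).1 hmemnp
  have h2' : (n : ℤ) * k = m * n := by
    have : (n • p).2.down = n • p.2.down := rfl
    rw [this] at h2
    simpa [nsmul_eq_mul] using h2
  have hmk : m = k := by
    have : (n : ℤ) * k = (n : ℤ) * m := by linarith [h2']
    exact (mul_left_cancel₀ hnZ this).symm
  have hnx : (n : ℤ) • x = k • (-a) := by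
    have : (n • p).1 = n • p.1 := rfl
    rw [this] at h1
    rw [← hmk]
    rw [natCast_zsmul]
    exact h1
  -- conclude
  have hxa : (n : ℤ) • (-(x + t • a)) = a := by
    rw [smul_neg, smul_add, hnx, hkt]
    rw [add_smul, one_smul, mul_smul, smul_neg, smul_neg]
    have : (n : ℤ) • (t • a) = t • ((n : ℤ) • a) := smul_comm _ _ _
    rw [this]
    abel
  refine ⟨-(x + t • a), ?_, ?_⟩
  · -- torsion
    have hxtors : IsOfFinAddOrder x := by
      have h1 : IsOfFinAddOrder ((n:ℤ) • x) := by
        rw [hnx]; exact tors_zsmul (by simpa using ha.neg) k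
      rw [natCast_zsmul] at h1
      exact h1.of_nsmul hn.ne'
    have := tors_add hxtors (tors_zsmul ha t)
    simpa using this.neg
  · rw [← natCast_zsmul]; exact hxa
end

section
/- Let A be an abelian group and suppose that every short exact sequence 0 → A →φ B →ψ C → 0 of abelian groups that is a t-extension splits. Then the torsion subgroup tA is divisible, A is isomorphic to the direct sum tA ⊕ A/tA, and A/tA is cotorsion, i.e., every short exact sequence 0 → A/tA → X → ℚ → 0 of abelian groups splits. -/
universe u

private lemma retraction_of_section {A B C : Type*} [AddCommGroup A] [AddCommGroup B]
    [AddCommGroup C] (φ : A →+ B) (ψ : B →+ C) (hφ : Function.Injective φ)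
    (hker : ∀ b : B, ψ b = 0 ↔ b ∈ φ.range)
    (s : C →+ B) (hs : ψ.comp s = AddMonoidHom.id C) :
    ∃ r : B →+ A, ∀ a : A, r (φ a) = a := by
  have hsψ : ∀ c, ψ (s c) = c := fun c => DFunLike.congr_fun hs c
  have key : ∀ b : B, ∃ a : A, φ a = b - s (ψ b) := by
    intro b
    rw [← AddMonoidHom.mem_range, ← hker]
    simp [hsψ]
  choose g hg using key
  have hadd : ∀ x y, g (x + y) = g x + g y := by
    intro x y
    apply hφ
    rw [map_add, hg, hg, hg, map_add, map_add]
    abel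
  refine ⟨AddMonoidHom.mk' g hadd, fun a => ?_⟩
  apply hφ
  rw [AddMonoidHom.mk'_apply, hg]
  have h0 : ψ (φ a) = 0 := (hker _).2 ⟨a, rfl⟩
  rw [h0, map_zero, sub_zero]

/-- If every t-extension of `A` splits, then `tA` is divisible, `A ≅ tA ⊕ A/tA`, and
`A/tA` is cotorsion. -/
theorem structure_of_tInjective
    (A : Type u) [AddCommGroup A]
    -- every t-extension of A splits:
    (hsplit : ∀ (B C : Type u) (_ : AddCommGroup B) (_ : AddCommGroup C)
      (φ : A →+ B) (ψ : B →+ C),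
      Function.Injective φ → Function.Surjective ψ →
      (∀ b : B, ψ b = 0 ↔ b ∈ φ.range) →
      (∀ c : C, IsOfFinAddOrder c → ∃ b : B, IsOfFinAddOrder b ∧ ψ b = c) →
      (∀ b : B, IsOfFinAddOrder b → ψ b = 0 → ∃ a : A, IsOfFinAddOrder a ∧ φ a = b) →
      ∃ s : C →+ B, ψ.comp s = AddMonoidHom.id C) :
    -- tA is divisible:
    (∀ a : A, IsOfFinAddOrder a → ∀ n : ℕ, 0 < n →
      ∃ x : A, IsOfFinAddOrder x ∧ n • x = a) ∧
    -- A ≅ tA ⊕ A/tA: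
    Nonempty (A ≃+ ((AddCommGroup.torsion A) × (A ⧸ AddCommGroup.torsion A))) ∧
    -- A/tA is cotorsion:
    (∀ (X : Type u) (_ : AddCommGroup X)
      (ι : (A ⧸ AddCommGroup.torsion A) →+ X) (π : X →+ ℚ),
      Function.Injective ι → Function.Surjective π →
      (∀ x : X, π x = 0 ↔ x ∈ ι.range) →
      ∃ s : ℚ →+ X, π.comp s = AddMonoidHom.id ℚ) := by
  classical
  -- ===== Part 1 : tA is divisible =====
  have hdiv : ∀ a : A, IsOfFinAddOrder a → ∀ n : ℕ, 0 < n →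
      ∃ x : A, IsOfFinAddOrder x ∧ n • x = a := by
    intro a ha n hn
    set m := addOrderOf a with hmdef
    have hm : 0 < m := addOrderOf_pos_iff.2 ha
    set N := n * m with hNdef
    have hNpos : 0 < N := Nat.mul_pos hn hm
    set H : AddSubgroup (A × ZMod N) := AddSubgroup.zmultiples (-a, (n : ZMod N)) with hHdef
    set mkH : (A × ZMod N) →+ (A × ZMod N) ⧸ H := QuotientAddGroup.mk' H with hmkH
    set φ : A →+ (A × ZMod N) ⧸ H := mkH.comp (AddMonoidHom.inl A (ZMod N)) with hφdef
    have hφ : Function.Injective φ := by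
      rw [injective_iff_map_eq_zero]
      intro a' h0
      have hmem : ((a', (0 : ZMod N)) : A × ZMod N) ∈ H :=
        (QuotientAddGroup.eq_zero_iff _).1 h0
      obtain ⟨k, hk⟩ := AddSubgroup.mem_zmultiples_iff.1 hmem
      have hk1 : k • (-a) = a' := congrArg Prod.fst hk
      have hk2 : k • ((n : ZMod N)) = 0 := congrArg Prod.snd hk
      have hcast : ((k * (n : ℤ) : ℤ) : ZMod N) = 0 := by
        push_cast
        rwa [zsmul_eq_mul] at hk2
      have hdvd : ((N : ℤ)) ∣ k * (n : ℤ) := (ZMod.intCast_zmod_eq_zero_iff_dvd _ _).1 hcast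
      have hmk : ((m : ℤ)) ∣ k := by
        have hNc : ((N : ℕ) : ℤ) = (n : ℤ) * (m : ℤ) := by rw [hNdef]; push_cast; ring
        rw [mul_comm k ((n : ℤ)), hNc] at hdvd
        exact (mul_dvd_mul_iff_left (by exact_mod_cast hn.ne' : (n : ℤ) ≠ 0)).1 hdvd
      have hka : k • a = 0 := addOrderOf_dvd_iff_zsmul_eq_zero.1 (hmdef ▸ hmk)
      rw [smul_neg, hka, neg_zero] at hk1
      exact hk1.symm
    set ψ : ((A × ZMod N) ⧸ H) →+ (((A × ZMod N) ⧸ H) ⧸ φ.range) :=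
      QuotientAddGroup.mk' φ.range with hψdef
    have hker : ∀ b, ψ b = 0 ↔ b ∈ φ.range := fun b => QuotientAddGroup.eq_zero_iff b
    have hψsurj : Function.Surjective ψ := QuotientAddGroup.mk'_surjective _
    -- key torsion element
    have htorsion : ∀ k : ZMod N, IsOfFinAddOrder (mkH (0, k)) := by
      intro k
      refine isOfFinAddOrder_iff_nsmul_eq_zero.2 ⟨N, hNpos, ?_⟩
      rw [← map_nsmul]
      have : (N : ℕ) • ((0 : A), k) = (0, 0) := by
        ext
        · simp
        · show (N : ℕ) • k = 0
          rw [nsmul_eq_mul, ZMod.natCast_self, zero_mul]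
      rw [this]
      exact map_zero mkH
    have hlift : ∀ c, IsOfFinAddOrder c →
        ∃ b, IsOfFinAddOrder b ∧ ψ b = c := by
      intro c _
      obtain ⟨b0, rfl⟩ := hψsurj c
      obtain ⟨p, rfl⟩ := QuotientAddGroup.mk'_surjective H b0
      refine ⟨mkH (0, p.2), htorsion p.2, ?_⟩
      have : mkH p - mkH (0, p.2) = φ p.1 := by
        rw [← map_sub]
        show mkH (p - (0, p.2)) = mkH (p.1, 0)
        congr 1
        ext <;> simp
      have hdiffmem : mkH p - mkH (0, p.2) ∈ φ.range := this ▸ ⟨p.1, rfl⟩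
      have hz : ψ (mkH p) - ψ (mkH (0, p.2)) = 0 := by
        rw [← map_sub ψ (mkH p) (mkH (0, p.2))]
        exact (hker _).2 hdiffmem
      exact (sub_eq_zero.1 hz).symm

    have hdown : ∀ b, IsOfFinAddOrder b → ψ b = 0 →
        ∃ a' : A, IsOfFinAddOrder a' ∧ φ a' = b := by
      intro b hb hb0
      obtain ⟨a', rfl⟩ := AddMonoidHom.mem_range.1 ((hker b).1 hb0)
      obtain ⟨j, hj, hjb⟩ := isOfFinAddOrder_iff_nsmul_eq_zero.1 hb
      refine ⟨a', isOfFinAddOrder_iff_nsmul_eq_zero.2 ⟨j, hj, hφ ?_⟩, rfl⟩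
      rw [map_nsmul, hjb, map_zero]
    obtain ⟨s, hs⟩ := hsplit _ (((A × ZMod N) ⧸ H) ⧸ φ.range) inferInstance inferInstance φ ψ hφ hψsurj hker hlift hdown
    obtain ⟨r, hr⟩ := retraction_of_section φ ψ hφ hker s hs
    refine ⟨r (mkH (0, 1)), ?_, ?_⟩
    · refine isOfFinAddOrder_iff_nsmul_eq_zero.2 ⟨N, hNpos, ?_⟩
      rw [← map_nsmul, ← map_nsmul]
      have : (N : ℕ) • ((0 : A), (1 : ZMod N)) = (0, 0) := by
        ext
        · simp
        · show (N : ℕ) • (1 : ZMod N) = 0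
          rw [nsmul_eq_mul, mul_one, ZMod.natCast_self]
      rw [this]
      rw [show mkH ((0 : A), (0 : ZMod N)) = 0 from map_zero mkH, map_zero]
    · have h1 : (n : ℕ) • ((0 : A), (1 : ZMod N)) = (0, (n : ZMod N)) := by
        ext
        · simp
        · show (n : ℕ) • (1 : ZMod N) = (n : ZMod N)
          rw [nsmul_eq_mul, mul_one]
      have h2 : mkH (0, (n : ZMod N)) = φ a := by
        show mkH (0, (n : ZMod N)) = mkH (a, 0)
        have hz : mkH (((0 : A), (n : ZMod N)) - (a, 0)) = 0 := by
          apply (QuotientAddGroup.eq_zero_iff _).2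
          have : ((0 : A), (n : ZMod N)) - (a, 0) = (-a, (n : ZMod N)) := by
            ext <;> simp
          rw [this]
          exact AddSubgroup.mem_zmultiples _
        rw [map_sub] at hz
        exact (sub_eq_zero.1 hz)
      rw [← map_nsmul, ← map_nsmul, h1, h2, hr]
  -- ===== Part 2 : the splitting A ≅ tA × A/tA =====
  set T := AddCommGroup.torsion A with hTdef
  have hdivT : ∀ (t : T) (n : ℕ), n ≠ 0 → ∃ x : T, n • x = t := by
    intro t n hn
    obtain ⟨x, hx, hxe⟩ := hdiv t.1 ((AddCommGroup.mem_torsion t.1).1 t.2) n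
      (Nat.pos_of_ne_zero hn)
    exact ⟨⟨x, (AddCommGroup.mem_torsion x).2 hx⟩, Subtype.ext (by simpa using hxe)⟩
  letI : DivisibleBy T ℕ :=
    { div := fun t n => if h : n = 0 then 0 else Classical.choose (hdivT t n h)
      div_zero := fun t => by simp
      div_cancel := fun {n} t hn => by
        show n • (if h : n = 0 then 0 else Classical.choose (hdivT t n h)) = t
        rw [dif_neg hn]; exact Classical.choose_spec (hdivT t n hn) }
  letI : DivisibleBy T ℤ := AddGroup.divisibleByIntOfDivisibleByNat T
  obtain ⟨r, hrc⟩ := (Module.Baer.of_divisible T).extension_property_addMonoidHom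
    T.subtype Subtype.val_injective (AddMonoidHom.id T)
  have hrT : ∀ t : T, r t.1 = t := fun t => DFunLike.congr_fun hrc t
  set p : A →+ A ⧸ T := QuotientAddGroup.mk' T with hpdef
  have hsurj : ∀ (t : T) (q : A ⧸ T), ∃ a : A, r a = t ∧ p a = q := by
    intro t q
    obtain ⟨a0, rfl⟩ := QuotientAddGroup.mk'_surjective T q
    refine ⟨a0 + (t.1 - (r a0).1), ?_, ?_⟩
    · rw [map_add, map_sub, hrT t, hrT (r a0)]
      abel
    · rw [map_add]
      have : p (t.1 - (r a0).1) = 0 :=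
        (QuotientAddGroup.eq_zero_iff _).2 (sub_mem t.2 (r a0).2)
      rw [this, add_zero]
  have hzero : ∀ a : A, r a = 0 → p a = 0 → a = 0 := by
    intro a h1 h2
    have haT : a ∈ T := (QuotientAddGroup.eq_zero_iff a).1 h2
    have := hrT ⟨a, haT⟩
    rw [show ((⟨a, haT⟩ : T) : A) = a from rfl, h1] at this
    exact congrArg Subtype.val this.symm
  set h : A →+ T × (A ⧸ T) := r.prod p with hhdef
  have hinj : Function.Injective h := by
    rw [injective_iff_map_eq_zero]
    intro a ha
    exact hzero a (congrArg Prod.fst ha) (congrArg Prod.snd ha)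
  have hsurj' : Function.Surjective h := by
    rintro ⟨t, q⟩
    obtain ⟨a, h1, h2⟩ := hsurj t q
    exact ⟨a, Prod.ext h1 h2⟩
  have hTF : ∀ q : A ⧸ T, IsOfFinAddOrder q → q = 0 := by
    intro q hq
    by_contra hne
    exact not_isOfFinAddOrder_of_isAddTorsionFree hne hq
  have hQtf : ∀ c : ℚ, IsOfFinAddOrder c → c = 0 := by
    intro c hc
    obtain ⟨j, hj, hjc⟩ := isOfFinAddOrder_iff_nsmul_eq_zero.1 hc
    rw [nsmul_eq_mul] at hjc
    have : (j : ℚ) ≠ 0 := Nat.cast_ne_zero.2 hj.ne'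
    exact (mul_eq_zero.1 hjc).resolve_left this
  refine ⟨hdiv, ⟨AddEquiv.ofBijective h ⟨hinj, hsurj'⟩⟩, ?_⟩
  -- ===== Part 3 : A/tA is cotorsion =====
  intro X instX ι π hι hπ hkerX
  let up : ℚ →+ ULift.{u} ℚ := AddMonoidHom.mk' ULift.up (fun _ _ => rfl)
  let down : ULift.{u} ℚ →+ ℚ := AddMonoidHom.mk' ULift.down (fun _ _ => rfl)
  have hdu : ∀ q : ℚ, down (up q) = q := fun _ => rfl
  have hud : ∀ z : ULift.{u} ℚ, up (down z) = z := fun _ => rfl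
  have hupinj : Function.Injective up := fun x y hxy => by
    rw [← hdu x, ← hdu y, hxy]
  let φ2 : A →+ T × X := r.prod (ι.comp p)
  let ψ2 : (T × X) →+ ULift.{u} ℚ := up.comp (π.comp (AddMonoidHom.snd T X))
  have hψ2ap : ∀ b : T × X, ψ2 b = up (π b.2) := fun _ => rfl
  have hψ2zero : ∀ b : T × X, ψ2 b = 0 ↔ π b.2 = 0 := by
    intro b
    rw [hψ2ap]
    constructor
    · intro hb
      exact hupinj (by rw [hb, map_zero])
    · intro hb; rw [hb, map_zero]
  have hφ2inj : Function.Injective φ2 := by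
    rw [injective_iff_map_eq_zero]
    intro a ha
    have h1 : r a = 0 := congrArg Prod.fst ha
    have h2 : ι (p a) = 0 := congrArg Prod.snd ha
    exact hzero a h1 (hι (by rw [h2, map_zero]))
  have hψ2surj : Function.Surjective ψ2 := by
    intro z
    obtain ⟨x, hx⟩ := hπ (down z)
    refine ⟨(0, x), ?_⟩
    rw [hψ2ap]
    show up (π x) = z
    rw [hx, hud]
  have hker2 : ∀ b : T × X, ψ2 b = 0 ↔ b ∈ φ2.range := by
    intro b
    rw [hψ2zero]
    constructor
    · intro h0
      obtain ⟨q, hq⟩ := AddMonoidHom.mem_range.1 ((hkerX b.2).1 h0)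
      obtain ⟨a, ha1, ha2⟩ := hsurj b.1 q
      refine ⟨a, ?_⟩
      show (r a, ι (p a)) = b
      rw [ha1, ha2, hq]
    · rintro ⟨a, rfl⟩
      exact (hkerX _).2 ⟨p a, rfl⟩
  have hlift2 : ∀ c : ULift.{u} ℚ, IsOfFinAddOrder c →
      ∃ b : T × X, IsOfFinAddOrder b ∧ ψ2 b = c := by
    intro c hc
    have hdc : down c = 0 := by
      apply hQtf
      obtain ⟨j, hj, hjc⟩ := isOfFinAddOrder_iff_nsmul_eq_zero.1 hc
      exact isOfFinAddOrder_iff_nsmul_eq_zero.2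
        ⟨j, hj, by rw [← map_nsmul, hjc, map_zero]⟩
    have hc0 : c = 0 := by rw [← hud c, hdc, map_zero]
    exact ⟨0, (isOfFinAddOrder_iff_nsmul_eq_zero.2 ⟨1, one_pos, smul_zero 1⟩),
      by rw [map_zero, hc0]⟩
  have hdown2 : ∀ b : T × X, IsOfFinAddOrder b → ψ2 b = 0 →
      ∃ a : A, IsOfFinAddOrder a ∧ φ2 a = b := by
    intro b hb h0
    obtain ⟨j, hj, hjb⟩ := isOfFinAddOrder_iff_nsmul_eq_zero.1 hb
    have hb2 : j • b.2 = 0 := congrArg Prod.snd hjb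
    obtain ⟨q, hq⟩ := AddMonoidHom.mem_range.1 ((hkerX b.2).1 ((hψ2zero b).1 h0))
    have hqtor : IsOfFinAddOrder q := by
      refine isOfFinAddOrder_iff_nsmul_eq_zero.2 ⟨j, hj, hι ?_⟩
      rw [map_nsmul, hq, hb2, map_zero]
    have hq0 : q = 0 := hTF q hqtor
    have hb20 : b.2 = 0 := by rw [← hq, hq0, map_zero]
    obtain ⟨a, ha1, ha2⟩ := hsurj b.1 0
    have haT : a ∈ T := (QuotientAddGroup.eq_zero_iff a).1 ha2
    refine ⟨a, (AddCommGroup.mem_torsion a).1 haT, ?_⟩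
    show (r a, ι (p a)) = b
    rw [ha1, ha2, map_zero, ← hb20]
  obtain ⟨s, hs⟩ := hsplit (T × X) (ULift.{u} ℚ) inferInstance inferInstance φ2 ψ2
    hφ2inj hψ2surj hker2 hlift2 hdown2
  refine ⟨(AddMonoidHom.snd T X).comp (s.comp up), ?_⟩
  ext q
  have hsq : ψ2 (s (up q)) = up q := DFunLike.congr_fun hs (up q)
  rw [hψ2ap] at hsq
  show π ((s (up q)).2) = q
  rw [← hdu (π ((s (up q)).2)), hsq, hdu]
end

section
/- Let D be a torsion-free abelian group such that every short exact sequence 0 → D → X → ℚ → 0 of abelian groups splits. Then every short exact sequence 0 → D →φ B →ψ C → 0 of abelian groups that is a t-extension splits: there exists a group homomorphism s : C → B with ψ ∘ s = id_C. -/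
universe u

open Function

theorem factorThru {B C T : Type*} [AddCommGroup B] [AddCommGroup C] [AddCommGroup T]
    (ψ : B →+ C) (hsurj : Function.Surjective ψ) (p : B →+ T)
    (hp : ∀ b, ψ b = 0 → p b = 0) : ∃ χ : C →+ T, χ.comp ψ = p := by
  have key : ∀ b b', ψ b = ψ b' → p b = p b' := by
    intro b b' h
    have := hp (b - b') (by rw [map_sub, h, sub_self])
    rw [map_sub, sub_eq_zero] at this
    exact this
  refine ⟨AddMonoidHom.mk' (fun c => p (surjInv hsurj c)) ?_, ?_⟩
  · intro c c'
    show p _ = p _ + p _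
    rw [← map_add]
    exact key _ _ (by rw [map_add, surjInv_eq hsurj, surjInv_eq hsurj, surjInv_eq hsurj])
  · ext b
    exact key _ _ (surjInv_eq hsurj (ψ b))

theorem smul_surj_of_fraction_module (V : Type*) [AddCommGroup V]
    [Module (FractionRing ℤ) V] {n : ℤ} (hn : n ≠ 0) :
    Function.Surjective (fun v : V => n • v) := by
  intro v
  refine ⟨((n : FractionRing ℤ))⁻¹ • v, ?_⟩
  have hn' : ((n : FractionRing ℤ)) ≠ 0 := by
    intro h0
    apply hn
    have := (eq_intCast (algebraMap ℤ (FractionRing ℤ)) n).trans h0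
    exact IsFractionRing.to_map_eq_zero_iff.mp this
  show n • _ = v
  rw [← Int.cast_smul_eq_zsmul (FractionRing ℤ), smul_smul, mul_inv_cancel₀ hn', one_smul]

theorem exists_hull {M : Type u} [AddCommGroup M] (h : ∀ m : M, IsOfFinAddOrder m → m = 0) :
    ∃ (G : Type u) (_ : AddCommGroup G) (_ : Module (FractionRing ℤ) G) (ι : M →+ G),
      Function.Injective ι := by
  refine ⟨LocalizedModule (nonZeroDivisors ℤ) M, inferInstance, inferInstance,
    AddMonoidHom.mk' (fun m => LocalizedModule.mk m 1) ?_, ?_⟩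
  · intro a b
    rw [LocalizedModule.mk_add_mk, one_smul, one_smul, one_mul]
  · intro x y hxy
    simp only [AddMonoidHom.mk'_apply] at hxy
    rw [LocalizedModule.mk_eq] at hxy
    obtain ⟨s, hs⟩ := hxy
    rw [one_smul, one_smul] at hs
    have hsub : (s : ℤ) • (x - y) = 0 := by
      have : (s : ℤ) • x = (s : ℤ) • y := hs
      rw [smul_sub, this, sub_self]
    have hsne : (s : ℤ) ≠ 0 := nonZeroDivisors.coe_ne_zero s
    have hfin : IsOfFinAddOrder (x - y) := by
      rw [isOfFinAddOrder_iff_zsmul_eq_zero]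
      exact ⟨s, hsne, hsub⟩
    exact sub_eq_zero.mp (h _ hfin)

theorem quot_torsionfree {B : Type u} [AddCommGroup B] :
    ∀ x : B ⧸ (AddCommGroup.torsion B), IsOfFinAddOrder x → x = 0 := by
  intro x hx
  induction x using QuotientAddGroup.induction_on with
  | H b =>
    obtain ⟨n, hn, hnb⟩ := (isOfFinAddOrder_iff_nsmul_eq_zero).mp hx
    rw [← QuotientAddGroup.mk_nsmul, QuotientAddGroup.eq_zero_iff] at hnb
    have htor : IsOfFinAddOrder (n • b) := hnb
    obtain ⟨m, hm, hmb⟩ := (isOfFinAddOrder_iff_nsmul_eq_zero).mp htor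
    rw [QuotientAddGroup.eq_zero_iff]
    show IsOfFinAddOrder b
    rw [isOfFinAddOrder_iff_nsmul_eq_zero]
    exact ⟨m * n, by positivity, by rw [mul_smul]; exact hmb⟩


theorem lift_through_quotient
    (D : Type u) [AddCommGroup D]
    (hcot : ∀ (X : Type u) (_ : AddCommGroup X) (ι : D →+ X) (π : X →+ ℚ),
      Function.Injective ι → Function.Surjective π →
      (∀ x : X, π x = 0 ↔ x ∈ ι.range) →
      ∃ s : ℚ →+ X, π.comp s = AddMonoidHom.id ℚ)
    {G : Type u} [AddCommGroup G] (ι : D →+ G) (hι : Function.Injective ι)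
    (u : ℚ →+ G ⧸ ι.range) :
    ∃ w : ℚ →+ G, (QuotientAddGroup.mk' ι.range).comp w = u := by
  set q := QuotientAddGroup.mk' ι.range with hq
  set θ : G × ℚ →+ G ⧸ ι.range :=
    (q.comp (AddMonoidHom.fst G ℚ)) - (u.comp (AddMonoidHom.snd G ℚ)) with hθ
  set X := θ.ker with hX
  have hmemX : ∀ x : G × ℚ, x ∈ X ↔ q x.1 = u x.2 := by
    intro x
    rw [hX, AddMonoidHom.mem_ker, hθ]
    simp [sub_eq_zero]
  have hmem0 : ∀ d : D, (ι d, (0:ℚ)) ∈ X := by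
    intro d
    rw [hmemX]
    simp only [map_zero]
    rw [hq]
    rw [QuotientAddGroup.mk'_apply, QuotientAddGroup.eq_zero_iff]
    exact ⟨d, rfl⟩
  set ι' : D →+ X := ((ι.prod 0).codRestrict X (fun d => hmem0 d)) with hι'
  set π : X →+ ℚ := (AddMonoidHom.snd G ℚ).comp X.subtype with hπ
  have hinj' : Function.Injective ι' := by
    intro d d' h
    apply hι
    have := congrArg (fun x : X => (x : G × ℚ).1) h
    exact this
  have hsurj' : Function.Surjective π := by
    intro r
    obtain ⟨a, ha⟩ := QuotientAddGroup.mk'_surjective ι.range (u r)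
    exact ⟨⟨(a, r), (hmemX _).mpr ha⟩, rfl⟩
  have hexact : ∀ x : X, π x = 0 ↔ x ∈ ι'.range := by
    intro x
    constructor
    · intro h0
      have hx2 : (x : G × ℚ).2 = 0 := h0
      have hx1 : q (x : G × ℚ).1 = 0 := by
        have := (hmemX _).mp x.2
        rw [hx2, map_zero] at this
        exact this
      rw [hq, QuotientAddGroup.mk'_apply, QuotientAddGroup.eq_zero_iff] at hx1
      obtain ⟨d, hd⟩ := hx1
      refine ⟨d, ?_⟩
      apply Subtype.ext
      apply Prod.ext
      · exact hd
      · exact hx2.symm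
    · rintro ⟨d, rfl⟩
      rfl
  obtain ⟨s, hs⟩ := hcot X inferInstance ι' π hinj' hsurj' hexact
  refine ⟨((AddMonoidHom.fst G ℚ).comp X.subtype).comp s, ?_⟩
  ext r
  have hmem := (hmemX _).mp (s r).2
  have hr2 : ((s r : G × ℚ)).2 = r := by
    have := congrArg (fun f : ℚ →+ ℚ => f r) hs
    exact this
  simp only [AddMonoidHom.comp_apply]
  calc q ((s r : G × ℚ)).1 = u ((s r : G × ℚ)).2 := hmem
    _ = u r := by rw [hr2]

theorem exists_retraction
    (D : Type u) [AddCommGroup D]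
    (hD : ∀ d : D, IsOfFinAddOrder d → d = 0)
    (hcot : ∀ (X : Type u) (_ : AddCommGroup X) (ι : D →+ X) (π : X →+ ℚ),
      Function.Injective ι → Function.Surjective π →
      (∀ x : X, π x = 0 ↔ x ∈ ι.range) →
      ∃ s : ℚ →+ X, π.comp s = AddMonoidHom.id ℚ)
    {B' C' : Type u} [AddCommGroup B'] [AddCommGroup C']
    (φ : D →+ B') (ψ : B' →+ C')
    (hinj : Function.Injective φ) (hsurj : Function.Surjective ψ)
    (hex : ∀ b : B', ψ b = 0 ↔ b ∈ φ.range)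
    (hC : ∀ c : C', IsOfFinAddOrder c → c = 0) :
    ∃ r : B' →+ D, r.comp φ = AddMonoidHom.id D := by
  classical
  -- divisible hull of D
  obtain ⟨G, _, _, ι, hι⟩ := exists_hull hD
  haveI : DivisibleBy G ℤ :=
    divisibleByOfSMulRightSurj G ℤ (fun {n} hn => smul_surj_of_fraction_module G hn)
  have hBaerG : Module.Baer ℤ G := Module.Baer.of_divisible G
  -- extend ι along φ
  obtain ⟨g, hg⟩ := hBaerG.extension_property_addMonoidHom φ hinj ι
  -- the quotient T and the obstruction χ
  set q : G →+ G ⧸ ι.range := QuotientAddGroup.mk' ι.range with hqdef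
  have hq0 : ∀ d : D, q (ι d) = 0 := by
    intro d
    rw [hqdef, QuotientAddGroup.mk'_apply, QuotientAddGroup.eq_zero_iff]
    exact ⟨d, rfl⟩
  obtain ⟨χ, hχ⟩ := factorThru ψ hsurj (q.comp g) (by
    intro b hb
    obtain ⟨d, rfl⟩ := (hex b).mp hb
    have : g (φ d) = ι d := DFunLike.congr_fun hg d
    simp only [AddMonoidHom.comp_apply, this]
    exact hq0 d)
  -- divisible hull of C'
  obtain ⟨V, _, _, ιC, hιC⟩ := exists_hull hC
  -- T is divisible, extend χ along ιC
  haveI : DivisibleBy (G ⧸ ι.range) ℤ :=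
    Function.Surjective.divisibleBy (⇑q) (QuotientAddGroup.mk'_surjective _)
      (fun a n => map_zsmul q n a)
  have hBaerT : Module.Baer ℤ (G ⧸ ι.range) := Module.Baer.of_divisible _
  obtain ⟨χV, hχV⟩ := hBaerT.extension_property_addMonoidHom ιC hιC χ
  -- basis of V over FractionRing ℤ; lift χV through q basis-by-basis
  set bV := Module.Basis.ofVectorSpace (FractionRing ℤ) V with hbV
  set alg := FractionRing.algEquiv ℤ ℚ with halg
  have hexw : ∀ i : Module.Basis.ofVectorSpaceIndex (FractionRing ℤ) V,
      ∃ w : ℚ →+ G, q.comp w =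
        AddMonoidHom.mk' (fun r : ℚ => χV ((alg.symm r) • bV i))
          (fun a b => by
            show χV (alg.symm (a + b) • bV i) = χV (alg.symm a • bV i) + χV (alg.symm b • bV i)
            rw [map_add, add_smul, map_add]) := by
    intro i
    exact lift_through_quotient D hcot ι hι _
  choose w hw using hexw
  set algHom : FractionRing ℤ →+ ℚ := AddMonoidHom.mk' (fun k => alg k) (map_add alg) with halgHom
  set L : (Module.Basis.ofVectorSpaceIndex (FractionRing ℤ) V →₀ FractionRing ℤ) →+ G :=
    Finsupp.liftAddHom (fun i => (w i).comp algHom) with hL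
  have key : q.comp L = χV.comp (bV.repr.symm.toLinearMap.toAddMonoidHom) := by
    apply Finsupp.addHom_ext
    intro i c
    simp only [AddMonoidHom.comp_apply, hL, Finsupp.liftAddHom_apply_single,
      LinearMap.toAddMonoidHom_coe, LinearEquiv.coe_coe]
    rw [Module.Basis.repr_symm_single]
    have h1 : q ((w i) (algHom c)) = χV ((alg.symm (alg c)) • bV i) :=
      DFunLike.congr_fun (hw i) (algHom c)
    rw [h1, AlgEquiv.symm_apply_apply]
  set W : V →+ G := L.comp (bV.repr.toLinearMap.toAddMonoidHom) with hW
  have hqW : ∀ v : V, q (W v) = χV v := by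
    intro v
    have := DFunLike.congr_fun key (bV.repr v)
    simp only [AddMonoidHom.comp_apply, LinearMap.toAddMonoidHom_coe,
      LinearEquiv.coe_coe] at this ⊢
    rw [hW]
    simp only [AddMonoidHom.comp_apply, LinearMap.toAddMonoidHom_coe, LinearEquiv.coe_coe]
    rw [this, LinearEquiv.symm_apply_apply]
  -- the lift of χ
  set uC : C' →+ G := W.comp ιC with huC
  have hquC : ∀ c : C', q (uC c) = χ c := by
    intro c
    rw [huC, AddMonoidHom.comp_apply, hqW]
    exact DFunLike.congr_fun hχV c
  -- the retraction
  set r' : B' →+ G := g - uC.comp ψ with hr'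
  have hmem : ∀ b : B', r' b ∈ ι.range := by
    intro b
    have h0 : q (r' b) = 0 := by
      rw [hr']
      simp only [AddMonoidHom.sub_apply, AddMonoidHom.comp_apply, map_sub]
      rw [hquC]
      have : χ (ψ b) = q (g b) := DFunLike.congr_fun hχ b
      rw [this, sub_self]
    rw [hqdef, QuotientAddGroup.mk'_apply, QuotientAddGroup.eq_zero_iff] at h0
    exact h0
  have hspec : ∀ b : B', ι (Classical.choose (hmem b)) = r' b :=
    fun b => Classical.choose_spec (hmem b)
  refine ⟨AddMonoidHom.mk' (fun b => Classical.choose (hmem b)) ?_, ?_⟩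
  · intro a b
    apply hι
    rw [map_add ι, hspec, hspec, hspec, map_add]
  · ext d
    apply hι
    simp only [AddMonoidHom.comp_apply, AddMonoidHom.mk'_apply, AddMonoidHom.id_apply]
    rw [hspec, hr']
    have hψφ : ψ (φ d) = 0 := (hex (φ d)).mpr ⟨d, rfl⟩
    simp only [AddMonoidHom.sub_apply, AddMonoidHom.comp_apply, hψφ, map_zero, sub_zero]
    exact DFunLike.congr_fun hg d


/-- Every t-extension of a torsion-free cotorsion group splits. -/
theorem tExtension_splits_of_torsionFree_cotorsion
    (D : Type u) [AddCommGroup D]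
    -- D is torsion-free:
    (hD : ∀ d : D, IsOfFinAddOrder d → d = 0)
    -- D is cotorsion: every extension of D by ℚ splits:
    (hcot : ∀ (X : Type u) (_ : AddCommGroup X) (ι : D →+ X) (π : X →+ ℚ),
      Function.Injective ι → Function.Surjective π →
      (∀ x : X, π x = 0 ↔ x ∈ ι.range) →
      ∃ s : ℚ →+ X, π.comp s = AddMonoidHom.id ℚ) :
    -- every t-extension of D splits:
    ∀ (B C : Type u) (_ : AddCommGroup B) (_ : AddCommGroup C)
      (φ : D →+ B) (ψ : B →+ C),
      Function.Injective φ → Function.Surjective ψ →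
      (∀ b : B, ψ b = 0 ↔ b ∈ φ.range) →
      (∀ c : C, IsOfFinAddOrder c → ∃ b : B, IsOfFinAddOrder b ∧ ψ b = c) →
      (∀ b : B, IsOfFinAddOrder b → ψ b = 0 → ∃ d : D, IsOfFinAddOrder d ∧ φ d = b) →
      ∃ s : C →+ B, ψ.comp s = AddMonoidHom.id C := by
  intro B C _ _ φ ψ hinj hsurj hex ht1 ht2
  classical
  set tB := AddCommGroup.torsion B with htB
  set tC := AddCommGroup.torsion C with htC
  set mkB : B →+ B ⧸ tB := QuotientAddGroup.mk' tB with hmkB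
  set mkC : C →+ C ⧸ tC := QuotientAddGroup.mk' tC with hmkC
  have htle : tB ≤ tC.comap ψ := by
    intro b hb
    have hb' : IsOfFinAddOrder b := hb
    obtain ⟨n, hn, hnb⟩ := isOfFinAddOrder_iff_nsmul_eq_zero.mp hb'
    show IsOfFinAddOrder (ψ b)
    rw [isOfFinAddOrder_iff_nsmul_eq_zero]
    exact ⟨n, hn, by rw [← map_nsmul, hnb, map_zero]⟩
  set ψq : B ⧸ tB →+ C ⧸ tC := QuotientAddGroup.map tB tC ψ htle with hψq
  set φq : D →+ B ⧸ tB := mkB.comp φ with hφq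
  have hψqmk : ∀ b : B, ψq (mkB b) = mkC (ψ b) := by
    intro b; rfl
  -- injectivity of φq
  have hφqinj : Function.Injective φq := by
    rw [injective_iff_map_eq_zero]
    intro d hd
    rw [hφq, AddMonoidHom.comp_apply, hmkB, QuotientAddGroup.mk'_apply,
      QuotientAddGroup.eq_zero_iff] at hd
    have htor : IsOfFinAddOrder (φ d) := hd
    have hψ0 : ψ (φ d) = 0 := (hex (φ d)).mpr ⟨d, rfl⟩
    obtain ⟨d', hd'tor, hφd'⟩ := ht2 (φ d) htor hψ0
    have : d' = 0 := hD d' hd'tor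
    rw [this, map_zero] at hφd'
    have hφd0 : φ d = 0 := hφd'.symm
    exact hinj (by rw [hφd0, map_zero])
  -- surjectivity of ψq
  have hψqsurj : Function.Surjective ψq := by
    intro x
    induction x using QuotientAddGroup.induction_on with
    | H c =>
      obtain ⟨b, rfl⟩ := hsurj c
      exact ⟨mkB b, hψqmk b⟩
  -- exactness
  have hexq : ∀ x : B ⧸ tB, ψq x = 0 ↔ x ∈ φq.range := by
    intro x
    induction x using QuotientAddGroup.induction_on with
    | H b =>
      constructor
      · intro h0
        have : mkC (ψ b) = 0 := by rw [← hψqmk]; exact h0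
        rw [hmkC, QuotientAddGroup.mk'_apply, QuotientAddGroup.eq_zero_iff] at this
        have htor : IsOfFinAddOrder (ψ b) := this
        obtain ⟨b', hb'tor, hψb'⟩ := ht1 (ψ b) htor
        have h0' : ψ (b - b') = 0 := by rw [map_sub, hψb', sub_self]
        obtain ⟨d, hd⟩ := (hex (b - b')).mp h0'
        refine ⟨d, ?_⟩
        rw [hφq, AddMonoidHom.comp_apply, hd]
        show mkB (b - b') = mkB b
        have hb'0 : mkB b' = 0 := by
          rw [hmkB, QuotientAddGroup.mk'_apply, QuotientAddGroup.eq_zero_iff]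
          exact hb'tor
        rw [map_sub, hb'0, sub_zero]
      · rintro ⟨d, hd⟩
        rw [← hd, hφq, AddMonoidHom.comp_apply, hψqmk, (hex (φ d)).mpr ⟨d, rfl⟩, map_zero]
  have hCq := quot_torsionfree (B := C)
  obtain ⟨rq, hrq⟩ := exists_retraction D hD hcot φq ψq hφqinj hψqsurj hexq hCq
  set r : B →+ D := rq.comp mkB with hr
  have hrφ : ∀ d, r (φ d) = d := by
    intro d
    have := DFunLike.congr_fun hrq d
    exact this
  -- build the section
  set p : B →+ B := AddMonoidHom.id B - φ.comp r with hp
  obtain ⟨s, hs⟩ := factorThru ψ hsurj p (by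
    intro b hb
    obtain ⟨d, rfl⟩ := (hex b).mp hb
    rw [hp]
    simp only [AddMonoidHom.sub_apply, AddMonoidHom.id_apply, AddMonoidHom.comp_apply]
    rw [hrφ, sub_self])
  refine ⟨s, ?_⟩
  ext c
  obtain ⟨b, rfl⟩ := hsurj c
  have hsb : s (ψ b) = p b := DFunLike.congr_fun hs b
  simp only [AddMonoidHom.comp_apply, AddMonoidHom.id_apply, hsb, hp]
  simp only [AddMonoidHom.sub_apply, AddMonoidHom.id_apply, AddMonoidHom.comp_apply, map_sub]
  rw [(hex (φ (r b))).mpr ⟨r b, rfl⟩, sub_zero]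
end

section
/- Let D be a torsion-free abelian group such that every short exact sequence 0 → D → X → ℚ → 0 of abelian groups splits. Then every short exact sequence 0 → D →φ B →ψ C → 0 of abelian groups in which φ(D) is a pure subgroup of B splits: there exists a group homomorphism s : C → B with ψ ∘ s = id_C. (In other words, a torsion-free cotorsion abelian group is algebraically compact.) -/
universe u

open TensorProduct

lemma zsmul_inj_of_qmodule {M : Type*} [AddCommGroup M] [Module ℚ M] {n : ℤ} (hn : n ≠ 0)
    {a b : M} (h : n • a = n • b) : a = b := by
  rw [← Int.cast_smul_eq_zsmul ℚ, ← Int.cast_smul_eq_zsmul ℚ] at h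
  exact smul_right_injective M (by exact_mod_cast hn) h

lemma ratHom_apply {M : Type*} [AddCommGroup M] [Module ℚ M] (f : ℚ →+ M) (s : ℚ) :
    f s = s • f 1 := by
  have hden : ((s.den : ℤ) : ℚ) * s = ((s.num : ℤ) : ℚ) := by
    push_cast; rw [mul_comm, Rat.mul_den_eq_num]
  apply zsmul_inj_of_qmodule (n := (s.den : ℤ)) (by exact_mod_cast s.den_nz)
  calc (s.den : ℤ) • f s = f ((s.den : ℤ) • s) := (map_zsmul f _ _).symm
    _ = f ((s.num : ℤ) • (1 : ℚ)) := by rw [zsmul_eq_mul, zsmul_eq_mul, mul_one, hden]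
    _ = (s.num : ℤ) • f 1 := map_zsmul f _ _
    _ = ((s.num : ℤ) : ℚ) • f 1 := (Int.cast_smul_eq_zsmul ℚ _ _).symm
    _ = (((s.den : ℤ) : ℚ) * s) • f 1 := by rw [hden]
    _ = ((s.den : ℤ) : ℚ) • s • f 1 := mul_smul _ _ _
    _ = (s.den : ℤ) • s • f 1 := Int.cast_smul_eq_zsmul ℚ _ _

lemma nsmul_inv_smul_of_qmodule {M : Type*} [AddCommGroup M] [Module ℚ M] {n : ℕ} (hn : 0 < n)
    (x : M) : n • ((n : ℚ))⁻¹ • x = x := by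
  rw [← Nat.cast_smul_eq_nsmul ℚ, smul_smul,
    mul_inv_cancel₀ (by exact_mod_cast hn.ne' : (n : ℚ) ≠ 0), one_smul]

lemma extend_of_divisible {T X Y : Type u} [AddCommGroup T] [AddCommGroup X] [AddCommGroup Y]
    (hdiv : ∀ (t : T) (n : ℕ), 0 < n → ∃ t', n • t' = t)
    (f : X →+ Y) (hf : Function.Injective f) (g : X →+ T) :
    ∃ h : Y →+ T, ∀ x, h (f x) = g x := by
  have hnat : DivisibleBy T ℕ :=
    divisibleByOfSMulRightSurj T ℕ (fun {n} hn t => by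
      obtain ⟨t', ht'⟩ := hdiv t n (Nat.pos_of_ne_zero hn); exact ⟨t', ht'⟩)
  have hint : DivisibleBy T ℤ := AddGroup.divisibleByIntOfDivisibleByNat T
  have hinj : Module.Injective ℤ T := (Module.Baer.of_divisible T).injective
  obtain ⟨h, hh⟩ := hinj.out f.toIntLinearMap hf g.toIntLinearMap
  exact ⟨h.toAddMonoidHom, hh⟩

noncomputable def iotaQ (A : Type u) [AddCommGroup A] : A →ₗ[ℤ] ℚ ⊗[ℤ] A :=
  TensorProduct.mk ℤ ℚ A 1

instance iotaQ_loc (A : Type u) [AddCommGroup A] :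
    IsLocalizedModule (nonZeroDivisors ℤ) (iotaQ A) :=
  (isLocalizedModule_iff_isBaseChange (nonZeroDivisors ℤ) ℚ _).mpr
    (TensorProduct.isBaseChange ℤ A ℚ)

/-- A torsion-free cotorsion group is algebraically compact: every pure extension of it
splits. -/
theorem pure_extension_splits_of_torsionFree_cotorsion
    (D : Type u) [AddCommGroup D]
    -- D is torsion-free:
    (hD : ∀ d : D, IsOfFinAddOrder d → d = 0)
    -- D is cotorsion: every extension of D by ℚ splits:
    (hcot : ∀ (X : Type u) (_ : AddCommGroup X) (ι : D →+ X) (π : X →+ ℚ),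
      Function.Injective ι → Function.Surjective π →
      (∀ x : X, π x = 0 ↔ x ∈ ι.range) →
      ∃ s : ℚ →+ X, π.comp s = AddMonoidHom.id ℚ) :
    -- every pure extension of D splits:
    ∀ (B C : Type u) (_ : AddCommGroup B) (_ : AddCommGroup C)
      (φ : D →+ B) (ψ : B →+ C),
      Function.Injective φ → Function.Surjective ψ →
      (∀ b : B, ψ b = 0 ↔ b ∈ φ.range) →
      (∀ n : ℕ, 0 < n → ∀ b ∈ φ.range, (∃ x : B, n • x = b) → ∃ y ∈ φ.range, n • y = b) →
      ∃ s : C →+ B, ψ.comp s = AddMonoidHom.id C := by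
  intro B C _ _ φ ψ hφ hψ hex hpure
  -- torsion-freeness of D, restated for ℤ
  have htf : ∀ (n : ℤ), n ≠ 0 → ∀ d : D, n • d = 0 → d = 0 := by
    intro n hn d hd
    refine hD d ?_
    rw [isOfFinAddOrder_iff_nsmul_eq_zero]
    refine ⟨n.natAbs, Int.natAbs_pos.mpr hn, ?_⟩
    rw [← natCast_zsmul]
    rcases Int.natAbs_eq n with h | h
    · rw [← h, hd]
    · rw [← neg_eq_iff_eq_neg.mpr h, neg_zsmul, hd, neg_zero]
  -- injectivity of D → ℚ ⊗ D
  have hιD : Function.Injective (iotaQ D) := by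
    intro x y hxy
    have h0 : iotaQ D (x - y) = 0 := by rw [map_sub, hxy, sub_self]
    rw [IsLocalizedModule.eq_zero_iff (nonZeroDivisors ℤ)] at h0
    obtain ⟨s, hs⟩ := h0
    exact sub_eq_zero.mp (htf (s : ℤ) (nonZeroDivisors.coe_ne_zero s) _ hs)
  -- clearing denominators in ℚ ⊗ D
  have hclear : ∀ x : ℚ ⊗[ℤ] D, ∃ (m : ℤ) (d : D), m ≠ 0 ∧ m • x = iotaQ D d := by
    intro x
    obtain ⟨⟨d, s⟩, hs⟩ := IsLocalizedModule.surj (nonZeroDivisors ℤ) (iotaQ D) x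
    exact ⟨(s : ℤ), d, nonZeroDivisors.coe_ne_zero s, hs⟩
  set RD : AddSubgroup (ℚ ⊗[ℤ] D) := (iotaQ D).toAddMonoidHom.range with hRD
  set RB : AddSubgroup (ℚ ⊗[ℤ] B) := (iotaQ B).toAddMonoidHom.range with hRB
  set mkT : (ℚ ⊗[ℤ] D) →+ (ℚ ⊗[ℤ] D) ⧸ RD := QuotientAddGroup.mk' RD with hmkT
  set mkB : (ℚ ⊗[ℤ] B) →+ (ℚ ⊗[ℤ] B) ⧸ RB := QuotientAddGroup.mk' RB with hmkB
  set Qφ : (ℚ ⊗[ℤ] D) →ₗ[ℚ] (ℚ ⊗[ℤ] B) := LinearMap.baseChange ℚ φ.toIntLinearMap with hQφ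
  have hQφι : ∀ d : D, Qφ (iotaQ D d) = iotaQ B (φ d) := by
    intro d; rfl
  have hle : RD ≤ RB.comap Qφ.toAddMonoidHom := by
    rintro x ⟨d, rfl⟩
    exact ⟨φ d, (hQφι d).symm⟩
  set j : ((ℚ ⊗[ℤ] D) ⧸ RD) →+ ((ℚ ⊗[ℤ] B) ⧸ RB) :=
    QuotientAddGroup.map RD RB Qφ.toAddMonoidHom hle with hj
  have hjmk : ∀ x : ℚ ⊗[ℤ] D, j (mkT x) = mkB (Qφ x) := by
    intro x; rfl
  -- purity: j is injective
  have hjinj : Function.Injective j := by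
    rw [injective_iff_map_eq_zero]
    intro t ht
    obtain ⟨x, rfl⟩ := QuotientAddGroup.mk'_surjective RD t
    rw [hjmk] at ht
    rw [hmkB, QuotientAddGroup.mk'_apply, QuotientAddGroup.eq_zero_iff] at ht
    obtain ⟨b, hb⟩ := ht
    obtain ⟨m, d, hm, hmd⟩ := hclear x
    have h1 : iotaQ B (φ d - m • b) = 0 := by
      have h2 : iotaQ B (φ d) = m • iotaQ B b := by
        rw [← hQφι d, ← hmd, map_zsmul]
        exact congrArg (fun z => m • z) hb.symm
      rw [map_sub, map_zsmul, h2, sub_self]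
    rw [IsLocalizedModule.eq_zero_iff (nonZeroDivisors ℤ)] at h1
    obtain ⟨k, hk⟩ := h1
    rw [Submonoid.smul_def, smul_sub, sub_eq_zero] at hk
    have hk' : (k : ℤ) • φ d = ((k : ℤ) * m) • b := by rw [mul_smul]; exact hk
    have hKne : (k : ℤ) * m ≠ 0 := mul_ne_zero (nonZeroDivisors.coe_ne_zero k) hm
    have hnpos : 0 < ((k : ℤ) * m).natAbs := Int.natAbs_pos.mpr hKne
    have hsig : ((((k : ℤ) * m).natAbs : ℤ) = (k : ℤ) * m) ∨
        ((((k : ℤ) * m).natAbs : ℤ) = -((k : ℤ) * m)) := by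
      omega
    have hmem : (k : ℤ) • φ d ∈ φ.range := ⟨(k : ℤ) • d, by rw [map_zsmul]⟩
    have hdivB : ∃ x : B, ((k : ℤ) * m).natAbs • x = (k : ℤ) • φ d := by
      rcases hsig with h | h
      · exact ⟨b, by rw [← natCast_zsmul, h, ← hk']⟩
      · exact ⟨-b, by rw [← natCast_zsmul, h, neg_zsmul, smul_neg, neg_neg, ← hk']⟩
    obtain ⟨y, ⟨d'', rfl⟩, hy⟩ := hpure _ hnpos _ hmem hdivB
    have hdd : ((((k : ℤ) * m).natAbs : ℤ)) • d'' = (k : ℤ) • d := by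
      apply hφ
      rw [map_zsmul, map_zsmul, natCast_zsmul]
      exact hy
    have hKx : ((k : ℤ) * m) • x = iotaQ D ((k : ℤ) • d) := by
      rw [mul_smul, hmd, map_zsmul]
    have hx : ∃ e : D, x = iotaQ D e := by
      rcases hsig with h | h
      · refine ⟨d'', zsmul_inj_of_qmodule hKne ?_⟩
        simp only [hKx, ← hdd, h, map_zsmul]
      · refine ⟨-d'', zsmul_inj_of_qmodule hKne ?_⟩
        simp only [hKx, ← hdd, h, neg_zsmul, map_neg, map_zsmul, smul_neg]
    obtain ⟨e, rfl⟩ := hx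
    rw [QuotientAddGroup.mk'_apply, QuotientAddGroup.eq_zero_iff]
    exact ⟨e, rfl⟩
  -- T is divisible
  have hTdiv : ∀ (t : (ℚ ⊗[ℤ] D) ⧸ RD) (n : ℕ), 0 < n → ∃ t', n • t' = t := by
    intro t n hn
    obtain ⟨x, rfl⟩ := QuotientAddGroup.mk'_surjective RD t
    exact ⟨mkT (((n : ℚ))⁻¹ • x), by rw [← map_nsmul, nsmul_inv_smul_of_qmodule hn]⟩
  -- E : retraction of j
  obtain ⟨E, hE⟩ := extend_of_divisible hTdiv j hjinj (AddMonoidHom.id _)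
  -- the pairing maps
  set tmulB : B → ℚ →+ ℚ ⊗[ℤ] B :=
    fun b => (((TensorProduct.mk ℤ ℚ B).flip) b).toAddMonoidHom with htmulB
  set gbar : B → ℚ →+ (ℚ ⊗[ℤ] D) ⧸ RD :=
    fun b => E.comp (mkB.comp (tmulB b)) with hgbar
  set P : B → D → Prop := fun b d => ∀ s : ℚ, gbar b s = mkT (s • iotaQ D d) with hP
  -- existence of approximate preimages
  have hPex : ∀ b : B, ∃ d : D, P b d := by
    intro b
    set Xs : AddSubgroup (ℚ × (ℚ ⊗[ℤ] D)) :=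
      { carrier := {p | gbar b p.1 = mkT p.2}
        zero_mem' := by simp
        add_mem' := by
          intro p q hp hq
          simp only [Set.mem_setOf_eq, Prod.fst_add, Prod.snd_add, map_add] at *
          rw [hp, hq]
        neg_mem' := by
          intro p hp
          simp only [Set.mem_setOf_eq, Prod.fst_neg, Prod.snd_neg, map_neg] at *
          rw [hp] } with hXs
    have hmem0 : ∀ d : D, ((0 : ℚ), iotaQ D d) ∈ Xs := by
      intro d
      show gbar b 0 = mkT (iotaQ D d)
      have h0 : mkT (iotaQ D d) = 0 := by
        rw [hmkT, QuotientAddGroup.mk'_apply, QuotientAddGroup.eq_zero_iff]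
        exact ⟨d, rfl⟩
      rw [map_zero, h0]
    set ι' : D →+ ↥Xs := AddMonoidHom.mk' (fun d => ⟨((0 : ℚ), iotaQ D d), hmem0 d⟩)
      (fun d e => by
        ext : 1
        show ((0 : ℚ), iotaQ D (d + e)) = ((0 : ℚ), iotaQ D d) + ((0 : ℚ), iotaQ D e)
        rw [Prod.mk_add_mk, add_zero, map_add]) with hι'
    set π' : ↥Xs →+ ℚ := (AddMonoidHom.fst ℚ (ℚ ⊗[ℤ] D)).comp Xs.subtype with hπ'
    have hι'inj : Function.Injective ι' := by
      intro d e h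
      have h2 : iotaQ D d = iotaQ D e := congrArg (fun p => p.1.2) h
      exact hιD h2
    have hπ'surj : Function.Surjective π' := by
      intro s
      obtain ⟨x, hx⟩ := QuotientAddGroup.mk'_surjective RD (gbar b s)
      exact ⟨⟨(s, x), hx.symm⟩, rfl⟩
    have hexact : ∀ p : ↥Xs, π' p = 0 ↔ p ∈ ι'.range := by
      intro p
      constructor
      · intro hp0
        have hmem : gbar b p.val.1 = mkT p.val.2 := p.2
        have hp1 : p.val.1 = 0 := hp0
        rw [hp1, map_zero] at hmem
        have hmem2 : p.val.2 ∈ RD := by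
          have h5 := hmem.symm
          rw [hmkT, QuotientAddGroup.mk'_apply, QuotientAddGroup.eq_zero_iff] at h5
          exact h5
        obtain ⟨d, hd⟩ := hmem2
        refine ⟨d, ?_⟩
        apply Subtype.ext
        show ((0 : ℚ), iotaQ D d) = p.val
        have h6 : iotaQ D d = p.val.2 := hd
        rw [h6, ← hp1]
      · rintro ⟨d, rfl⟩
        rfl
    obtain ⟨sec, hsec⟩ := hcot (↥Xs) inferInstance ι' π' hι'inj hπ'surj hexact
    set g : ℚ →+ ℚ ⊗[ℤ] D := ((AddMonoidHom.snd ℚ (ℚ ⊗[ℤ] D)).comp Xs.subtype).comp sec with hg'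
    have hg : ∀ s : ℚ, mkT (g s) = gbar b s := by
      intro s
      have h1 : (sec s).val.1 = s := DFunLike.congr_fun hsec s
      have h2 : gbar b (sec s).val.1 = mkT (sec s).val.2 := (sec s).2
      rw [h1] at h2
      exact h2.symm
    have hg1 : mkT (g 1) = 0 := by
      rw [hg 1]
      show E (mkB ((1 : ℚ) ⊗ₜ[ℤ] b)) = 0
      have h3 : mkB ((1 : ℚ) ⊗ₜ[ℤ] b) = 0 := by
        rw [hmkB, QuotientAddGroup.mk'_apply, QuotientAddGroup.eq_zero_iff]
        exact ⟨b, rfl⟩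
      rw [h3, map_zero]
    have hg1' : g 1 ∈ RD := by
      rw [hmkT, QuotientAddGroup.mk'_apply, QuotientAddGroup.eq_zero_iff] at hg1
      exact hg1
    obtain ⟨dd, hdd2⟩ := hg1'
    have hdd3 : iotaQ D dd = g 1 := hdd2
    refine ⟨dd, fun s => ?_⟩
    rw [← hg s, ratHom_apply g s, ← hdd3]
  -- uniqueness up to divisible elements
  have hPuniq : ∀ (b : B) (d d' : D), P b d → P b d' →
      ∀ n : ℕ, 0 < n → ∃ e : D, n • e = d - d' := by
    intro b d d' h1 h2 n hn
    have hs : ((n : ℚ))⁻¹ • iotaQ D (d - d') ∈ RD := by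
      have h3 : mkT (((n : ℚ))⁻¹ • iotaQ D (d - d')) = 0 := by
        rw [map_sub, smul_sub, map_sub, ← h1 (((n : ℚ))⁻¹), ← h2 (((n : ℚ))⁻¹), sub_self]
      rw [hmkT, QuotientAddGroup.mk'_apply, QuotientAddGroup.eq_zero_iff] at h3
      exact h3
    obtain ⟨e, he⟩ := hs
    have he' : iotaQ D e = ((n : ℚ))⁻¹ • iotaQ D (d - d') := he
    refine ⟨e, hιD ?_⟩
    rw [map_nsmul, he', nsmul_inv_smul_of_qmodule hn]
  -- P is compatible with φ
  have hPφ : ∀ d : D, P (φ d) d := by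
    intro d s
    show E (mkB (s ⊗ₜ[ℤ] (φ d))) = mkT (s • iotaQ D d)
    have h1 : s ⊗ₜ[ℤ] (φ d) = Qφ (s ⊗ₜ[ℤ] d) := rfl
    have h2 : s ⊗ₜ[ℤ] d = s • iotaQ D d := by
      show s ⊗ₜ[ℤ] d = s • ((1 : ℚ) ⊗ₜ[ℤ] d)
      rw [TensorProduct.smul_tmul', smul_eq_mul, mul_one]
    rw [h1, ← hjmk, hE, h2]
    rfl
  -- P is additive
  have hPadd : ∀ (b b' : B) (d d' : D), P b d → P b' d' → P (b + b') (d + d') := by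
    intro b b' d d' h1 h2 s
    have h3 : gbar (b + b') s = gbar b s + gbar b' s := by
      show E (mkB (s ⊗ₜ[ℤ] (b + b'))) = E (mkB (s ⊗ₜ[ℤ] b)) + E (mkB (s ⊗ₜ[ℤ] b'))
      rw [TensorProduct.tmul_add, map_add, map_add]
    rw [h3, h1 s, h2 s, map_add, smul_add, ← map_add]
  -- the subgroup of divisible elements
  set V : AddSubgroup D :=
    { carrier := {d | ∀ n : ℕ, 0 < n → ∃ e : D, n • e = d}
      zero_mem' := fun n _ => ⟨0, smul_zero n⟩
      add_mem' := by
        rintro a b ha hb n hn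
        obtain ⟨e, he⟩ := (ha : ∀ n : ℕ, 0 < n → ∃ e : D, n • e = a) n hn
        obtain ⟨f, hf⟩ := (hb : ∀ n : ℕ, 0 < n → ∃ e : D, n • e = b) n hn
        exact ⟨e + f, by rw [smul_add, he, hf]⟩
      neg_mem' := by
        rintro a ha n hn
        obtain ⟨e, he⟩ := (ha : ∀ n : ℕ, 0 < n → ∃ e : D, n • e = a) n hn
        exact ⟨-e, by rw [smul_neg, he]⟩ } with hV
  choose dOf hdOf using hPex
  -- the quotient map q : B →+ D ⧸ V
  have hqadd : ∀ a b : B, (QuotientAddGroup.mk' V) (dOf (a + b)) =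
      (QuotientAddGroup.mk' V) (dOf a) + (QuotientAddGroup.mk' V) (dOf b) := by
    intro a b
    rw [← map_add, QuotientAddGroup.mk'_eq_mk']
    have m1 : (dOf (a + b)) - (dOf a + dOf b) ∈ V := by
      exact fun n hn => hPuniq (a + b) _ _ (hdOf (a + b))
        (hPadd a b _ _ (hdOf a) (hdOf b)) n hn
    have m2 : (dOf a + dOf b) - dOf (a + b) ∈ V := by
      have := V.neg_mem m1
      rwa [neg_sub] at this
    exact ⟨_, m2, by abel⟩
  set q : B →+ D ⧸ V := AddMonoidHom.mk' (fun b => QuotientAddGroup.mk' V (dOf b)) hqadd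
    with hq
  have hqφ : ∀ d : D, q (φ d) = QuotientAddGroup.mk' V d := by
    intro d
    show QuotientAddGroup.mk' V (dOf (φ d)) = QuotientAddGroup.mk' V d
    rw [QuotientAddGroup.mk'_eq_mk']
    have m1 : dOf (φ d) - d ∈ V := by
      exact fun n hn => hPuniq (φ d) _ _ (hdOf (φ d)) (hPφ d) n hn
    have m2 : d - dOf (φ d) ∈ V := by
      have := V.neg_mem m1
      rwa [neg_sub] at this
    exact ⟨_, m2, by abel⟩
  -- V is divisible
  have hVdiv : ∀ (v : ↥V) (n : ℕ), 0 < n → ∃ w : ↥V, n • w = v := by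
    rintro ⟨v, hv⟩ n hn
    obtain ⟨e, he⟩ := (hv : ∀ n : ℕ, 0 < n → ∃ e : D, n • e = v) n hn
    have hem : e ∈ V := by
      refine fun m hm => ?_
      obtain ⟨f, hf⟩ := (hv : ∀ n : ℕ, 0 < n → ∃ e : D, n • e = v) (n * m)
        (Nat.mul_pos hn hm)
      have h1 : n • (m • f) = n • e := by
        rw [smul_smul, hf, he]
      refine ⟨f, ?_⟩
      have h2 : ((n : ℤ)) • (m • f - e) = 0 := by
        rw [smul_sub, natCast_zsmul, natCast_zsmul, h1, sub_self]
      have h3 := htf (n : ℤ) (by exact_mod_cast hn.ne') _ h2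
      rw [sub_eq_zero] at h3
      exact h3
    refine ⟨⟨e, hem⟩, ?_⟩
    apply Subtype.ext
    show n • e = v
    exact he
  -- retraction onto V
  obtain ⟨πV, hπV⟩ := extend_of_divisible hVdiv V.subtype Subtype.coe_injective
    (AddMonoidHom.id ↥V)
  obtain ⟨πhat, hπhat⟩ := extend_of_divisible hVdiv φ hφ πV
  -- section of the projection D → D ⧸ V
  have hker : ∀ v ∈ V, (AddMonoidHom.id D - V.subtype.comp πV) v = 0 := by
    intro v hv
    show v - ↑(πV v) = 0
    have h1 : πV v = ⟨v, hv⟩ := hπV ⟨v, hv⟩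
    rw [h1, sub_self]
  set σ : D ⧸ V →+ D := QuotientAddGroup.lift V (AddMonoidHom.id D - V.subtype.comp πV)
    hker with hσdef
  have hσ : ∀ d : D, σ (QuotientAddGroup.mk' V d) = d - ↑(πV d) := fun d => rfl
  -- the retraction r : B →+ D
  set r : B →+ D := (σ.comp q) + V.subtype.comp (πhat.comp
    (AddMonoidHom.id B - φ.comp (σ.comp q))) with hr
  have hrφ : ∀ d : D, r (φ d) = d := by
    intro d
    show σ (q (φ d)) + ↑(πhat (φ d - φ (σ (q (φ d))))) = d
    rw [hqφ d, hσ d, map_sub φ d ((πV d : D)), sub_sub_cancel, hπhat]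
    have h1 : πV ((V.subtype) (πV d)) = πV d := hπV (πV d)
    have h2 : πV ((πV d : D)) = πV d := h1
    rw [h2]
    abel
  -- build the section
  set p : B →+ B := AddMonoidHom.id B - φ.comp r with hp
  have hpφ : ∀ d : D, p (φ d) = 0 := by
    intro d
    show φ d - φ (r (φ d)) = 0
    rw [hrφ, sub_self]
  have hψp : ∀ b : B, ψ (p b) = ψ b := by
    intro b
    show ψ (b - φ (r b)) = ψ b
    rw [map_sub, (hex (φ (r b))).mpr ⟨r b, rfl⟩, sub_zero]
  have hpker : ∀ b : B, ψ b = 0 → p b = 0 := by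
    intro b hb
    obtain ⟨d, rfl⟩ := (hex b).mp hb
    exact hpφ d
  choose bOf hbOf using hψ
  refine ⟨AddMonoidHom.mk' (fun c => p (bOf c)) ?_, ?_⟩
  · intro c c'
    have h1 : ψ (bOf (c + c') - bOf c - bOf c') = 0 := by
      rw [map_sub, map_sub, hbOf, hbOf, hbOf]
      abel
    have h2 := hpker _ h1
    rw [map_sub, map_sub, sub_sub, sub_eq_zero] at h2
    exact h2
  · ext c
    show ψ (p (bOf c)) = c
    rw [hψp, hbOf]
end

section
/- Let C be an abelian group such that for all abelian groups A and B, every short exact sequence 0 → A →φ B →ψ C → 0 that is a t-extension splits (there exists a group homomorphism s : C → B with ψ ∘ s = id_C). Then C is a free abelian group. -/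
universe u


theorem free_of_submodule_finsupp {ι : Type u} (N : Submodule ℤ (ι →₀ ℤ)) :
    Module.Free ℤ N := by
  classical
  letI : LinearOrder ι := IsWellOrder.linearOrder WellOrderingRel
  haveI : WellFoundedLT ι := ⟨(inferInstance : IsWellOrder ι WellOrderingRel).wf⟩
  -- the submodule of elements of N supported on indices ≤ α
  let Nle : ι → Submodule ℤ (ι →₀ ℤ) := fun α =>
    N ⊓ (⨅ i ∈ {i : ι | α < i}, LinearMap.ker (Finsupp.lapply (R := ℤ) i))
  have mem_Nle : ∀ α (x : ι →₀ ℤ), x ∈ Nle α ↔ x ∈ N ∧ ∀ i, α < i → x i = 0 := by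
    intro α x
    simp [Nle, Submodule.mem_iInf]
  -- the ideal of α-th coordinates
  let I : ι → Ideal ℤ := fun α => Submodule.map (Finsupp.lapply (R := ℤ) α) (Nle α)
  let a : ι → ℤ := fun α => Submodule.IsPrincipal.generator (I α)
  have ha : ∀ α, a α ∈ I α := fun α => Submodule.IsPrincipal.generator_mem (I α)
  have hmemI : ∀ α (x : ι →₀ ℤ), x ∈ Nle α → ∃ c : ℤ, x α = c * a α := by
    intro α x hx
    have : x α ∈ I α := ⟨x, hx, rfl⟩
    obtain ⟨c, hc⟩ := (Submodule.IsPrincipal.mem_iff_eq_smul_generator (I α)).1 this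
    exact ⟨c, hc⟩
  -- choose y α ∈ Nle α with (y α) α = a α
  have hy : ∀ α, ∃ x : ι →₀ ℤ, x ∈ Nle α ∧ x α = a α := by
    intro α
    obtain ⟨x, hx, hxa⟩ := ha α
    exact ⟨x, hx, hxa⟩
  choose y hyN hya using hy
  have hy_zero : ∀ α i, α < i → (y α) i = 0 := by
    intro α i h
    exact ((mem_Nle α (y α)).1 (hyN α)).2 i h
  set S := {α : ι // a α ≠ 0} with hS
  set v : S → (ι →₀ ℤ) := fun s => y s.1 with hv
  -- linear independence
  have li : LinearIndependent ℤ v := by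
    rw [linearIndependent_iff]
    intro l hl
    by_contra hlne
    have hsupp : l.support.Nonempty := Finsupp.support_nonempty_iff.2 hlne
    -- the maximum index occurring
    have himg : (l.support.image (fun s : S => s.1)).Nonempty := hsupp.image _
    set β := (l.support.image (fun s : S => s.1)).max' himg with hβ
    have hβmem : β ∈ l.support.image (fun s : S => s.1) := Finset.max'_mem _ _
    obtain ⟨s₀, hs₀mem, hs₀⟩ := Finset.mem_image.1 hβmem
    -- apply the β-th coordinate
    have happ := congrArg (fun z : ι →₀ ℤ => z β) hl
    simp only [Finsupp.linearCombination_apply, Finsupp.sum, Finsupp.coe_zero, Pi.zero_apply] at happ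
    rw [Finsupp.finset_sum_apply] at happ
    have hterm : ∀ s ∈ l.support, (l s • v s) β = if s = s₀ then l s₀ * a s₀.1 else 0 := by
      intro s hs
      by_cases hss : s = s₀
      · subst hss
        rw [if_pos rfl, Finsupp.smul_apply, hv]
        rw [← hs₀, hya, smul_eq_mul]
      · have hle : s.1 ≤ β := Finset.le_max' _ _ (Finset.mem_image.2 ⟨s, hs, rfl⟩)
        have hne : s.1 ≠ β := by
          rw [← hs₀]
          exact fun h => hss (Subtype.ext h)
        have hlt : s.1 < β := lt_of_le_of_ne hle hne
        rw [if_neg hss, Finsupp.smul_apply, hv]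
        rw [hy_zero s.1 β hlt, smul_zero]
    rw [Finset.sum_congr rfl hterm, Finset.sum_ite_eq' l.support s₀] at happ
    simp only [hs₀mem, if_true] at happ
    have : l s₀ = 0 := by
      rcases mul_eq_zero.1 happ with h | h
      · exact h
      · exact absurd h s₀.2
    exact (Finsupp.mem_support_iff.1 hs₀mem) this
  -- spanning
  have hspan_le : Submodule.span ℤ (Set.range v) ≤ N := by
    rw [Submodule.span_le]
    rintro _ ⟨s, rfl⟩
    exact ((mem_Nle s.1 (y s.1)).1 (hyN s.1)).1
  have key : ∀ β : ι, ∀ x : ι →₀ ℤ, x ∈ N → (∀ i, x i ≠ 0 → i ≤ β) →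
      x ∈ Submodule.span ℤ (Set.range v) := by
    intro β
    induction β using WellFoundedLT.induction with
    | ind β IH =>
      intro x hxN hxsupp
      -- x ∈ Nle β
      have hxNle : x ∈ Nle β := (mem_Nle β x).2 ⟨hxN, fun i hi => by
        by_contra h
        exact absurd (hxsupp i h) (not_le.2 hi)⟩
      obtain ⟨c, hc⟩ := hmemI β x hxNle
      by_cases haβ : a β = 0
      · -- then x β = 0, recurse directly
        have hxβ : x β = 0 := by rw [hc, haβ, mul_zero]
        rcases eq_or_ne x 0 with rfl | hxne
        · exact Submodule.zero_mem _
        · have hs : x.support.Nonempty := Finsupp.support_nonempty_iff.2 hxne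
          have hmβ : x.support.max' hs < β := by
            refine lt_of_le_of_ne
              (hxsupp _ (Finsupp.mem_support_iff.1 (Finset.max'_mem _ _))) (fun h => ?_)
            exact (Finsupp.mem_support_iff.1 (Finset.max'_mem x.support hs)) (by rw [h]; exact hxβ)
          exact IH _ hmβ x hxN (fun i hi => Finset.le_max' _ _ (Finsupp.mem_support_iff.2 hi))
      · -- a β ≠ 0 : subtract c • y β
        have hsmem : v ⟨β, haβ⟩ ∈ Submodule.span ℤ (Set.range v) :=
          Submodule.subset_span ⟨⟨β, haβ⟩, rfl⟩
        set x' := x - c • y β with hx'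
        have hx'N : x' ∈ N := N.sub_mem hxN (N.smul_mem c ((mem_Nle β (y β)).1 (hyN β)).1)
        have hx'β : x' β = 0 := by
          simp [hx', hc, hya β, smul_eq_mul]
        have hx'supp : ∀ i, x' i ≠ 0 → i ≤ β := by
          intro i hi
          by_contra h
          push_neg at h
          have h1 : x i = 0 := by
            by_contra h1; exact absurd (hxsupp i h1) (not_le.2 h)
          have h2 : (y β) i = 0 := hy_zero β i h
          apply hi
          simp [hx', h1, h2]
        have hx'span : x' ∈ Submodule.span ℤ (Set.range v) := by
          rcases eq_or_ne x' 0 with h0 | hxne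
          · rw [h0]; exact Submodule.zero_mem _
          · have hs : x'.support.Nonempty := Finsupp.support_nonempty_iff.2 hxne
            have hmβ : x'.support.max' hs < β := by
              refine lt_of_le_of_ne
                (hx'supp _ (Finsupp.mem_support_iff.1 (Finset.max'_mem _ _))) (fun h => ?_)
              exact (Finsupp.mem_support_iff.1 (Finset.max'_mem x'.support hs)) (by rw [h]; exact hx'β)
            exact IH _ hmβ x' hx'N (fun i hi => Finset.le_max' _ _ (Finsupp.mem_support_iff.2 hi))
        have : x = x' + c • y β := by rw [hx']; abel
        rw [this]
        exact Submodule.add_mem _ hx'span (Submodule.smul_mem _ c hsmem)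
  have hspan : Submodule.span ℤ (Set.range v) = N := by
    refine le_antisymm hspan_le ?_
    intro x hxN
    rcases eq_or_ne x 0 with rfl | hxne
    · exact Submodule.zero_mem _
    · have hs : x.support.Nonempty := Finsupp.support_nonempty_iff.2 hxne
      exact key (x.support.max' hs) x hxN
        (fun i hi => Finset.le_max' _ _ (Finsupp.mem_support_iff.2 hi))
  exact Module.Free.of_basis ((Module.Basis.span li).map (LinearEquiv.ofEq _ _ hspan))

/-- If every t-extension by `C` splits, then `C` is a free abelian group. -/
theorem free_of_tProjective
    (C : Type u) [AddCommGroup C]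
    -- every t-extension by C splits:
    (hsplit : ∀ (A B : Type u) (_ : AddCommGroup A) (_ : AddCommGroup B)
      (φ : A →+ B) (ψ : B →+ C),
      Function.Injective φ → Function.Surjective ψ →
      (∀ b : B, ψ b = 0 ↔ b ∈ φ.range) →
      (∀ c : C, IsOfFinAddOrder c → ∃ b : B, IsOfFinAddOrder b ∧ ψ b = c) →
      (∀ b : B, IsOfFinAddOrder b → ψ b = 0 → ∃ a : A, IsOfFinAddOrder a ∧ φ a = b) →
      ∃ s : C →+ B, ψ.comp s = AddMonoidHom.id C) :
    -- C is a free abelian group: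
    Module.Free ℤ C := by
  classical
  -- the free cover of C
  let F : Type u := C →₀ ℤ
  let π : F →+ C := (Finsupp.linearCombination ℤ (id : C → C)).toAddMonoidHom
  have hπ : ∀ c : C, π (Finsupp.single c 1) = c := fun c => by
    show Finsupp.linearCombination ℤ (id : C → C) (Finsupp.single c 1) = c
    rw [Finsupp.linearCombination_single, one_smul, id]
  have hπsurj : Function.Surjective π := fun c => ⟨Finsupp.single c 1, hπ c⟩
  -- F is torsion-free
  have hFtf : ∀ (f : F) (n : ℕ), n ≠ 0 → n • f = 0 → f = 0 := by
    intro f n hn hnf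
    ext i
    simp only [Finsupp.coe_zero, Pi.zero_apply]
    have h0 : (n • f) i = (0 : F) i := by rw [hnf]
    rw [Finsupp.smul_apply, nsmul_eq_mul, Finsupp.coe_zero, Pi.zero_apply] at h0
    exact (mul_eq_zero.1 h0).resolve_left (by exact_mod_cast hn)
  -- Step A: C is torsion-free
  have tfree : ∀ c : C, IsOfFinAddOrder c → c = 0 := by
    intro c hc
    by_contra hcne
    obtain ⟨χ₀, hχ₀⟩ := CharacterModule.exists_character_apply_ne_zero_of_ne_zero hcne
    let Q : Type u := ULift.{u} (AddCircle (1 : ℚ))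
    let up : AddCircle (1 : ℚ) →+ Q := AddEquiv.ulift.symm.toAddMonoidHom
    let χ : C →+ Q := up.comp (χ₀ : C →+ AddCircle (1 : ℚ))
    have hupinj : Function.Injective up := AddEquiv.ulift.symm.injective
    have hχc : χ c ≠ 0 := fun h => hχ₀ (hupinj (by rw [map_zero]; exact h))
    have hnpos : 0 < addOrderOf c := hc.addOrderOf_pos
    have hcz : addOrderOf c • c = 0 := addOrderOf_nsmul_eq_zero c
    -- Q is divisible
    have hdiv : ∀ q : Q, ∃ q' : Q, (addOrderOf c : ℤ) • q' = q := by
      intro q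
      refine ⟨up (DivisibleBy.div (AddEquiv.ulift q) (addOrderOf c : ℤ)), ?_⟩
      have h := DivisibleBy.div_cancel (α := ℤ) (AddEquiv.ulift q)
        (n := (addOrderOf c : ℤ)) (by exact_mod_cast hnpos.ne')
      rw [← map_zsmul up, h]
      exact AddEquiv.symm_apply_apply _ _
    let T : AddSubgroup C := AddCommGroup.torsion C
    -- the middle group of the t-extension
    let G : Type u := F × (↥T × Q)
    let ψ₀ : G →+ C := π.comp (AddMonoidHom.fst F (↥T × Q)) +
      T.subtype.comp ((AddMonoidHom.fst ↥T Q).comp (AddMonoidHom.snd F (↥T × Q)))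
    have hψ₀ : ∀ x : G, ψ₀ x = π x.1 + (x.2.1 : C) := fun x => rfl
    let d : G →+ Q := χ.comp ψ₀ - (zsmulAddGroupHom (addOrderOf c : ℤ)).comp
      ((AddMonoidHom.snd ↥T Q).comp (AddMonoidHom.snd F (↥T × Q)))
    have hd : ∀ x : G, d x = χ (ψ₀ x) - (addOrderOf c : ℤ) • x.2.2 := fun x => rfl
    let B : AddSubgroup G := d.ker
    let ψ : ↥B →+ C := ψ₀.comp B.subtype
    let A : AddSubgroup ↥B := ψ.ker
    have hmemB : ∀ x : G, x ∈ B ↔ χ (π x.1 + (x.2.1 : C)) = (addOrderOf c : ℤ) • x.2.2 := by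
      intro x
      rw [AddMonoidHom.mem_ker, hd x, hψ₀ x, sub_eq_zero]
    obtain ⟨s, hs⟩ := hsplit ↥A ↥B inferInstance inferInstance A.subtype ψ
      A.subtype_injective
      (fun c₀ => by
        -- surjectivity of ψ
        obtain ⟨q, hq⟩ := hdiv (χ c₀)
        refine ⟨⟨(Finsupp.single c₀ 1, ((0 : ↥T), q)), (hmemB _).2 ?_⟩, ?_⟩
        · show χ (π (Finsupp.single c₀ 1) + ((0 : ↥T) : C)) = (addOrderOf c : ℤ) • q
          rw [hπ c₀, ZeroMemClass.coe_zero, add_zero, hq]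
        · show π (Finsupp.single c₀ 1) + ((0 : ↥T) : C) = c₀
          rw [hπ c₀, ZeroMemClass.coe_zero, add_zero])
      (fun b => by
        -- the kernel condition
        constructor
        · intro h; exact ⟨⟨b, h⟩, rfl⟩
        · rintro ⟨a, rfl⟩; exact a.2)
      (fun c₀ hc₀ => by
        -- torsion elements of C lift to torsion elements of B
        obtain ⟨q, hq⟩ := hdiv (χ c₀)
        have hq' : addOrderOf c • q = χ c₀ := by rw [← natCast_zsmul]; exact hq
        have hm0 : addOrderOf c₀ • c₀ = 0 := addOrderOf_nsmul_eq_zero c₀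
        have hmpos : 0 < addOrderOf c₀ := hc₀.addOrderOf_pos
        have hxB : ((0 : F), ((⟨c₀, (AddCommGroup.mem_torsion c₀).2 hc₀⟩ : ↥T), q)) ∈ B := by
          refine (hmemB _).2 ?_
          show χ (π 0 + c₀) = (addOrderOf c : ℤ) • q
          rw [map_zero, zero_add, hq]
        refine ⟨⟨_, hxB⟩, ?_, ?_⟩
        · rw [isOfFinAddOrder_iff_nsmul_eq_zero]
          refine ⟨addOrderOf c₀ * addOrderOf c, Nat.mul_pos hmpos hnpos, ?_⟩
          apply Subtype.ext
          show (addOrderOf c₀ * addOrderOf c) •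
            (((0 : F), ((⟨c₀, _⟩ : ↥T), q)) : G) = (0 : G)
          have h1 : (addOrderOf c₀ * addOrderOf c) • c₀ = 0 := by
            rw [mul_nsmul, hm0, smul_zero]
          have h2 : (addOrderOf c₀ * addOrderOf c) • q = 0 := by
            rw [mul_comm, mul_nsmul, hq', ← map_nsmul χ, hm0, map_zero]
          refine Prod.ext (by simp) (Prod.ext ?_ ?_)
          · show ((addOrderOf c₀ * addOrderOf c) • (⟨c₀, _⟩ : ↥T) : ↥T) = (0 : ↥T)
            apply Subtype.ext
            show (addOrderOf c₀ * addOrderOf c) • c₀ = (0 : C)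
            exact h1
          · exact h2
        · show π 0 + c₀ = c₀
          rw [map_zero, zero_add])
      (fun b hb hb0 => by
        -- torsion elements of the kernel come from torsion elements of A
        refine ⟨⟨b, hb0⟩, ?_, rfl⟩
        rw [isOfFinAddOrder_iff_nsmul_eq_zero] at hb ⊢
        obtain ⟨k, hk, hkb⟩ := hb
        exact ⟨k, hk, Subtype.ext hkb⟩)
    -- analysis of the splitting at c
    have hsc : ψ (s c) = c := DFunLike.congr_fun hs c
    have hns : addOrderOf c • s c = 0 := by rw [← map_nsmul, hcz, map_zero]
    have hval : addOrderOf c • ((s c) : G) = 0 := congrArg Subtype.val hns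
    have hf : ((s c) : G).1 = 0 :=
      hFtf _ _ hnpos.ne' (congrArg Prod.fst hval)
    have hq0 : (addOrderOf c : ℤ) • ((s c) : G).2.2 = 0 := by
      rw [natCast_zsmul]
      exact congrArg (fun z : G => z.2.2) hval
    have htc : ((((s c) : G)).2.1 : C) = c := by
      have h := hsc
      rw [show ψ (s c) = π ((s c) : G).1 + ((((s c) : G)).2.1 : C) from rfl] at h
      rw [hf, map_zero, zero_add] at h
      exact h
    have hB := (hmemB ((s c) : G)).1 (s c).2
    rw [hf, map_zero, zero_add, htc, hq0] at hB
    exact hχc hB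
  -- Step B: the free cover is a t-extension, hence splits
  obtain ⟨s, hs⟩ := hsplit ↥π.ker F inferInstance inferInstance π.ker.subtype π
    π.ker.subtype_injective hπsurj
    (fun b => by
      constructor
      · intro h; exact ⟨⟨b, h⟩, rfl⟩
      · rintro ⟨a, rfl⟩; exact a.2)
    (fun c₀ hc₀ =>
      ⟨0, isOfFinAddOrder_iff_nsmul_eq_zero.2 ⟨1, one_pos, smul_zero 1⟩,
        by rw [map_zero, tfree c₀ hc₀]⟩)
    (fun b hb hb0 => by
      obtain ⟨k, hk, hkb⟩ := isOfFinAddOrder_iff_nsmul_eq_zero.1 hb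
      have hbz : b = 0 := hFtf b k hk.ne' hkb
      exact ⟨0, isOfFinAddOrder_iff_nsmul_eq_zero.2 ⟨1, one_pos, smul_zero 1⟩,
        by rw [map_zero, hbz]⟩)
  have hsinj : Function.Injective s := by
    intro x y hxy
    have hx : π (s x) = x := DFunLike.congr_fun hs x
    have hy : π (s y) = y := DFunLike.congr_fun hs y
    rw [← hx, ← hy, hxy]
  haveI : Module.Free ℤ (LinearMap.range s.toIntLinearMap) :=
    free_of_submodule_finsupp (ι := C) _
  exact Module.Free.of_equiv (LinearEquiv.ofInjective s.toIntLinearMap hsinj).symm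
end
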